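/- arXiv:2108.11934 — 5 statements merged into one kernel-verified Lean document; each statement's English description precedes it below -/
import Mathlib

section
/- Let g : ℂ → ℝ be a continuous compactly supported function and let Ψ(z) = log |z|² (with value -∞ at 0). Then the limit as t → -∞ of the integral of g(z)·e^{-Ψ(z)} = g(z)/|z|² over the annulus {z ∈ ℂ : t < log |z|² < t+1} (with respect to Lebesgue measure on ℂ ≅ ℝ²) exists and equals π · g(0). -/
open MeasureTheory Filter
open scoped Topology
open Set

-- set membership characterization
lemma mem_ann (t : ℝ) (z : ℂ) :
    (Real.exp t < Complex.normSq z ∧ Complex.normSq z < Real.exp (t + 1)) ↔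
      ‖z‖ ∈ Set.Ioo (Real.exp (t / 2)) (Real.exp ((t + 1) / 2)) := by
  have h : Complex.normSq z = ‖z‖ ^ 2 := by
    rw [← Complex.sq_norm]
  have e1 : Real.exp t = Real.exp (t / 2) ^ 2 := by
    rw [← Real.exp_nat_mul]; congr 1; push_cast; ring
  have e2 : Real.exp (t + 1) = Real.exp ((t + 1) / 2) ^ 2 := by
    rw [← Real.exp_nat_mul]; congr 1; push_cast; ring
  rw [h, e1, e2, Set.mem_Ioo]
  constructor
  · rintro ⟨h1, h2⟩
    exact ⟨lt_of_pow_lt_pow_left₀ 2 (norm_nonneg z) h1,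
      lt_of_pow_lt_pow_left₀ 2 (Real.exp_pos _).le h2⟩
  · rintro ⟨h1, h2⟩
    exact ⟨pow_lt_pow_left₀ h1 (Real.exp_pos _).le two_ne_zero,
      pow_lt_pow_left₀ h2 (norm_nonneg z) two_ne_zero⟩

lemma key_integral (t : ℝ) :
    ∫ z in {z : ℂ | Real.exp t < Complex.normSq z ∧ Complex.normSq z < Real.exp (t + 1)},
      (Complex.normSq z)⁻¹ = Real.pi := by
  set a := Real.exp (t / 2) with ha_def
  set b := Real.exp ((t + 1) / 2) with hb_def
  have ha : 0 < a := Real.exp_pos _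
  have hab : a < b := Real.exp_lt_exp.2 (by linarith)
  set S : Set ℂ := {z : ℂ | Real.exp t < Complex.normSq z ∧ Complex.normSq z < Real.exp (t + 1)}
  have hSmeas : MeasurableSet S := by
    apply MeasurableSet.inter
    · exact measurableSet_lt measurable_const Complex.continuous_normSq.measurable
    · exact measurableSet_lt Complex.continuous_normSq.measurable measurable_const
  set f : ℝ → ℝ := (Set.Ioo a b).indicator (fun y => (y ^ 2)⁻¹) with hf_def
  have hptwise : ∀ z : ℂ, f ‖z‖ = S.indicator (fun z => (Complex.normSq z)⁻¹) z := by
    intro z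
    have hiff := mem_ann t z
    by_cases hz : z ∈ S
    · rw [Set.indicator_of_mem hz, hf_def, Set.indicator_of_mem (hiff.1 hz),
        ← Complex.sq_norm]
    · rw [Set.indicator_of_notMem hz, hf_def,
        Set.indicator_of_notMem (fun h => hz (hiff.2 h))]
  have step1 : ∫ z in S, (Complex.normSq z)⁻¹ = ∫ z : ℂ, f ‖z‖ := by
    rw [← integral_indicator hSmeas]
    exact integral_congr_ae (Filter.Eventually.of_forall fun z => (hptwise z).symm)
  rw [step1, integral_fun_norm_addHaar volume f]
  have hdim : Module.finrank ℝ ℂ = 2 := Complex.finrank_real_complex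
  have hball : (volume (Metric.ball (0 : ℂ) 1)).toReal = Real.pi := by
    rw [Complex.volume_ball]
    simp [ENNReal.toReal_mul, ← NNReal.coe_real_pi]
  have hint : ∫ y in Set.Ioi (0 : ℝ), y ^ (Module.finrank ℝ ℂ - 1) • f y = 1 / 2 := by
    rw [hdim]
    have : ∀ y : ℝ, y ^ (2 - 1) • f y = (Set.Ioo a b).indicator (fun y => y * (y ^ 2)⁻¹) y := by
      intro y
      simp only [pow_one, smul_eq_mul, hf_def]
      by_cases hy : y ∈ Set.Ioo a b <;> simp [Set.indicator_of_mem, Set.indicator_of_notMem, hy]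
    rw [setIntegral_congr_fun measurableSet_Ioi fun y _ => this y,
      setIntegral_indicator measurableSet_Ioo]
    have hsub : Set.Ioi (0:ℝ) ∩ Set.Ioo a b = Set.Ioo a b :=
      Set.inter_eq_self_of_subset_right (fun y hy => lt_trans ha hy.1)
    rw [hsub]
    have : ∫ y in Set.Ioo a b, y * (y ^ 2)⁻¹ = ∫ y in Set.Ioo a b, y⁻¹ := by
      apply setIntegral_congr_fun measurableSet_Ioo
      intro y hy
      have : y ≠ 0 := (lt_trans ha hy.1).ne'
      field_simp
    rw [this, ← integral_Ioc_eq_integral_Ioo, ← intervalIntegral.integral_of_le hab.le,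
      integral_inv_of_pos ha (lt_trans ha hab), ha_def, hb_def, ← Real.exp_sub, Real.log_exp]
    ring
  rw [hint, measureReal_def, hball, hdim]
  rw [smul_eq_mul]; ring

/-- The Ohsawa measure of the model log canonical pair `(ℂ, log |z|²)` at its
non-klt locus `{0}`: the limit of the annulus integrals equals `π · g 0`. -/
theorem stmt0 (g : ℂ → ℝ) (hg : Continuous g) (hsupp : HasCompactSupport g) :
    Tendsto
      (fun t : ℝ =>
        ∫ z in {z : ℂ | Real.exp t < Complex.normSq z ∧ Complex.normSq z < Real.exp (t + 1)},
          g z / Complex.normSq z)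
      atBot (𝓝 (Real.pi * g 0)) := by
  obtain ⟨C, hC⟩ := hg.bounded_above_of_compact_support hsupp
  have hC' : ∀ x, ‖g x‖ ≤ C := fun x => hC x
  rw [Metric.tendsto_nhds]
  intro ε hε
  have hπ : (0:ℝ) < Real.pi := Real.pi_pos
  have hε' : 0 < ε / (Real.pi + 1) := by positivity
  obtain ⟨δ, hδpos, hδ⟩ := Metric.continuous_iff.mp hg 0 (ε / (Real.pi + 1)) hε'
  filter_upwards [eventually_le_atBot (2 * Real.log δ - 1)] with t ht
  set S : Set ℂ := {z : ℂ | Real.exp t < Complex.normSq z ∧ Complex.normSq z < Real.exp (t + 1)}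
    with hS_def
  have hSmeas : MeasurableSet S := by
    apply MeasurableSet.inter
    · exact measurableSet_lt measurable_const Complex.continuous_normSq.measurable
    · exact measurableSet_lt Complex.continuous_normSq.measurable measurable_const
  have hfin : volume S ≠ ⊤ := by
    have hsub : S ⊆ Metric.ball 0 (Real.exp ((t + 1) / 2)) := by
      intro z hz
      rw [mem_ball_zero_iff]
      exact ((mem_ann t z).1 hz).2
    exact ((measure_mono hsub).trans_lt measure_ball_lt_top).ne
  have hpos : ∀ z ∈ S, 0 < Complex.normSq z := fun z hz =>
    lt_trans (Real.exp_pos t) hz.1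
  have hnear : ∀ z ∈ S, dist (g z) (g 0) < ε / (Real.pi + 1) := by
    intro z hz
    apply hδ
    rw [dist_zero_right]
    calc ‖z‖ < Real.exp ((t + 1) / 2) := ((mem_ann t z).1 hz).2
      _ ≤ Real.exp (Real.log δ) := Real.exp_le_exp.2 (by linarith)
      _ = δ := Real.exp_log hδpos
  have hmbl : AEStronglyMeasurable (fun z : ℂ => (Complex.normSq z)⁻¹) (volume.restrict S) :=
    (Complex.continuous_normSq.measurable.inv).aestronglyMeasurable
  have int_inv : IntegrableOn (fun z : ℂ => (Complex.normSq z)⁻¹) S volume := by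
    apply Measure.integrableOn_of_bounded (M := (Real.exp t)⁻¹) hfin
      (Complex.continuous_normSq.measurable.inv).aestronglyMeasurable
    rw [ae_restrict_iff' hSmeas]
    filter_upwards with z hz
    rw [Real.norm_eq_abs, Pi.inv_apply, abs_of_nonneg (inv_nonneg.2 (Complex.normSq_nonneg z))]
    exact inv_anti₀ (Real.exp_pos t) hz.1.le
  have int_g : ∀ c : ℝ, IntegrableOn (fun z : ℂ => (c * g z) / Complex.normSq z) S volume := by
    intro c
    apply Measure.integrableOn_of_bounded (M := (|c| * C) * (Real.exp t)⁻¹) hfin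
      ((measurable_const.mul hg.measurable).div
        Complex.continuous_normSq.measurable).aestronglyMeasurable
    rw [ae_restrict_iff' hSmeas]
    filter_upwards with z hz
    show ‖c * g z * (Complex.normSq z)⁻¹‖ ≤ _
    rw [norm_mul, norm_mul]
    have h1 : ‖(Complex.normSq z)⁻¹‖ ≤ (Real.exp t)⁻¹ := by
      rw [Real.norm_eq_abs, abs_of_nonneg (inv_nonneg.2 (Complex.normSq_nonneg z))]
      exact inv_anti₀ (Real.exp_pos t) hz.1.le
    have h2 : ‖c‖ * ‖g z‖ ≤ |c| * C := by
      rw [Real.norm_eq_abs]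
      exact mul_le_mul_of_nonneg_left (hC' z) (abs_nonneg c)
    exact mul_le_mul h2 h1 (norm_nonneg _) (mul_nonneg (abs_nonneg c) ((norm_nonneg (g 0)).trans (hC' 0)))
  have int_g1 : IntegrableOn (fun z : ℂ => g z / Complex.normSq z) S volume := by
    have := int_g 1; simpa using this
  have int_c : IntegrableOn (fun z : ℂ => g 0 / Complex.normSq z) S volume := by
    simpa [div_eq_mul_inv, IntegrableOn] using int_inv.const_mul (g 0)
  have hconst : ∫ z in S, g 0 / Complex.normSq z = Real.pi * g 0 := by
    simp only [div_eq_mul_inv]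
    rw [integral_const_mul, key_integral t, mul_comm]
  rw [Real.dist_eq, ← hconst, ← integral_sub int_g1 int_c]
  have hbound : ‖∫ z in S, (g z / Complex.normSq z - g 0 / Complex.normSq z)‖ ≤
      ∫ z in S, (ε / (Real.pi + 1)) * (Complex.normSq z)⁻¹ := by
    apply norm_integral_le_of_norm_le (int_inv.const_mul _)
    rw [ae_restrict_iff' hSmeas]
    filter_upwards with z hz
    rw [div_sub_div_same, div_eq_mul_inv, norm_mul]
    have h1 : ‖(Complex.normSq z)⁻¹‖ = (Complex.normSq z)⁻¹ := by
      rw [Real.norm_eq_abs, abs_of_nonneg (inv_nonneg.2 (Complex.normSq_nonneg z))]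
    rw [h1]
    apply mul_le_mul_of_nonneg_right _ (inv_nonneg.2 (Complex.normSq_nonneg z))
    rw [Real.norm_eq_abs, ← Real.dist_eq]
    exact (hnear z hz).le
  rw [Real.norm_eq_abs] at hbound
  calc |∫ z in S, (g z / Complex.normSq z - g 0 / Complex.normSq z)|
      ≤ ∫ z in S, (ε / (Real.pi + 1)) * (Complex.normSq z)⁻¹ := hbound
    _ = (ε / (Real.pi + 1)) * Real.pi := by rw [integral_const_mul, key_integral t]
    _ < ε := by
        rw [div_mul_eq_mul_div, div_lt_iff₀ (by linarith)]
        nlinarith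
end

section
/- Fix k ≥ 1 and let Ψ(z) = k·log(|z₁|² + ⋯ + |z_k|²) on ℂ^k. For every continuous compactly supported g : ℂ^k → ℝ, the limit as t → -∞ of ∫_{t < Ψ(z) < t+1} g(z)·e^{-Ψ(z)} dλ(z) exists and equals (π^k / (k·(k-1)!)) · g(0), where λ is Lebesgue measure on ℂ^k ≅ ℝ^{2k}. -/
open MeasureTheory Filter Metric Set
open scoped Topology ENNReal

noncomputable section OhsawaAux

/-- The measurable equivalence from Euclidean space `ℝ^(k ⊕ k)` to `Fin k → ℂ`. -/
def ohsawaPhi (k : ℕ) : EuclideanSpace ℝ (Fin k ⊕ Fin k) ≃ᵐ (Fin k → ℂ) :=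
  (MeasurableEquiv.toLp 2 ((Fin k ⊕ Fin k) → ℝ)).symm.trans <|
    (MeasurableEquiv.sumPiEquivProdPi (fun _ : Fin k ⊕ Fin k => ℝ)).trans <|
      (MeasurableEquiv.arrowProdEquivProdArrow ℝ ℝ (Fin k)).symm.trans <|
        MeasurableEquiv.piCongrRight (fun _ : Fin k => Complex.measurableEquivRealProd.symm)

lemma ohsawaPhi_apply (k : ℕ) (x : EuclideanSpace ℝ (Fin k ⊕ Fin k)) (i : Fin k) :
    ohsawaPhi k x i = Complex.measurableEquivRealProd.symm (x (Sum.inl i), x (Sum.inr i)) := rfl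

lemma measurePreserving_ohsawaPhi (k : ℕ) : MeasurePreserving (ohsawaPhi k) volume volume := by
  have h0 := EuclideanSpace.volume_preserving_symm_measurableEquiv_toLp (Fin k ⊕ Fin k)
  have h1 := volume_measurePreserving_sumPiEquivProdPi (fun _ : Fin k ⊕ Fin k => ℝ)
  have h2 := (volume_measurePreserving_arrowProdEquivProdArrow ℝ ℝ (Fin k)).symm
  have h3 := volume_preserving_pi (fun _ : Fin k => Complex.volume_preserving_equiv_real_prod.symm)
  exact ((h3.comp h2).comp h1).comp h0

lemma sum_normSq_ohsawaPhi (k : ℕ) (x : EuclideanSpace ℝ (Fin k ⊕ Fin k)) :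
    ∑ i, Complex.normSq (ohsawaPhi k x i) = ‖x‖ ^ 2 := by
  have h : ‖x‖ ^ 2 = ∑ p, ‖x p‖ ^ 2 := by
    rw [EuclideanSpace.norm_eq, Real.sq_sqrt (by positivity)]
  rw [h, Fintype.sum_sum_type, ← Finset.sum_add_distrib]
  refine Finset.sum_congr rfl fun i _ => ?_
  simp only [ohsawaPhi_apply, Complex.measurableEquivRealProd_symm_apply, Complex.normSq_mk,
    Real.norm_eq_abs, sq_abs]
  ring

lemma ohsawa_mass (k : ℕ) (hk : 1 ≤ k) {a b : ℝ} (ha : 0 < a) (hab : a < b) :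
    (∫ z in {z : Fin k → ℂ | a < ∑ i, Complex.normSq (z i) ∧
        (∑ i, Complex.normSq (z i)) < b}, ((∑ i, Complex.normSq (z i)) ^ k)⁻¹)
      = Real.pi ^ k / (Nat.factorial k) *
        (2 * (k : ℝ) * Real.log (Real.sqrt b / Real.sqrt a)) := by
  haveI : Nonempty (Fin k) := ⟨⟨0, hk⟩⟩
  haveI : Nontrivial (EuclideanSpace ℝ (Fin k ⊕ Fin k)) := by infer_instance
  have hQ : Continuous fun z : Fin k → ℂ => ∑ i, Complex.normSq (z i) :=
    continuous_finset_sum _ fun i _ => Complex.continuous_normSq.comp (continuous_apply i)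
  have hSmeas : MeasurableSet {z : Fin k → ℂ | a < ∑ i, Complex.normSq (z i) ∧
      (∑ i, Complex.normSq (z i)) < b} := by
    have : {z : Fin k → ℂ | a < ∑ i, Complex.normSq (z i) ∧ (∑ i, Complex.normSq (z i)) < b}
        = (fun z : Fin k → ℂ => ∑ i, Complex.normSq (z i)) ⁻¹' Ioo a b := rfl
    rw [this]
    exact hQ.measurable measurableSet_Ioo
  have hra : 0 < Real.sqrt a := Real.sqrt_pos.2 ha
  have hrb : 0 < Real.sqrt b := Real.sqrt_pos.2 (ha.trans hab)
  set f : ℝ → ℝ := Set.indicator (Ioo (Real.sqrt a) (Real.sqrt b)) (fun r => ((r ^ 2) ^ k)⁻¹)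
    with hf
  have hmem : ∀ x : EuclideanSpace ℝ (Fin k ⊕ Fin k),
      ohsawaPhi k x ∈ {z : Fin k → ℂ | a < ∑ i, Complex.normSq (z i) ∧
        (∑ i, Complex.normSq (z i)) < b} ↔ ‖x‖ ∈ Ioo (Real.sqrt a) (Real.sqrt b) := by
    intro x
    simp only [mem_setOf_eq, mem_Ioo, sum_normSq_ohsawaPhi]
    constructor
    · rintro ⟨h1, h2⟩
      have hx : 0 < ‖x‖ := by
        rcases (norm_nonneg x).lt_or_eq with h | h
        · exact h
        · exfalso; rw [← h] at h1; simp at h1; nlinarith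
      exact ⟨(Real.sqrt_lt' hx).2 h1, (Real.lt_sqrt (norm_nonneg x)).2 h2⟩
    · rintro ⟨h1, h2⟩
      have hx : 0 < ‖x‖ := hra.trans h1
      exact ⟨(Real.sqrt_lt' hx).1 h1, (Real.lt_sqrt (norm_nonneg x)).1 h2⟩
  have hpt : (fun x : EuclideanSpace ℝ (Fin k ⊕ Fin k) =>
      Set.indicator {z : Fin k → ℂ | a < ∑ i, Complex.normSq (z i) ∧
        (∑ i, Complex.normSq (z i)) < b}
        (fun z => ((∑ i, Complex.normSq (z i)) ^ k)⁻¹) (ohsawaPhi k x))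
      = fun x => f ‖x‖ := by
    funext x
    by_cases hx : ohsawaPhi k x ∈ {z : Fin k → ℂ | a < ∑ i, Complex.normSq (z i) ∧
        (∑ i, Complex.normSq (z i)) < b}
    · rw [indicator_of_mem hx, hf, indicator_of_mem ((hmem x).1 hx), sum_normSq_ohsawaPhi]
    · rw [indicator_of_notMem hx, hf, indicator_of_notMem (fun h => hx ((hmem x).2 h))]
  rw [← integral_indicator hSmeas,
    ← (measurePreserving_ohsawaPhi k).integral_comp (ohsawaPhi k).measurableEmbedding, hpt,
    integral_fun_norm_addHaar volume f]
  have hcard : Fintype.card (Fin k ⊕ Fin k) = 2 * k := by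
    simp [Fintype.card_sum, two_mul]
  have hdim : Module.finrank ℝ (EuclideanSpace ℝ (Fin k ⊕ Fin k)) = 2 * k := by
    rw [finrank_euclideanSpace, hcard]
  rw [hdim]
  have hJ : (∫ y in Ioi (0 : ℝ), y ^ (2 * k - 1) • f y)
      = Real.log (Real.sqrt b / Real.sqrt a) := by
    have h1 : ∀ y : ℝ, y ^ (2 * k - 1) • f y
        = Set.indicator (Ioo (Real.sqrt a) (Real.sqrt b))
            (fun r => r ^ (2 * k - 1) * ((r ^ 2) ^ k)⁻¹) y := by
      intro y
      by_cases hy : y ∈ Ioo (Real.sqrt a) (Real.sqrt b) <;>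
        simp [hf, hy, indicator_of_mem, indicator_of_notMem]
    simp only [h1]
    have hss : Ioo (Real.sqrt a) (Real.sqrt b) ∩ Ioi 0 = Ioo (Real.sqrt a) (Real.sqrt b) :=
      inter_eq_left.2 fun y (hy : y ∈ Ioo (Real.sqrt a) (Real.sqrt b)) => hra.trans hy.1
    rw [integral_indicator measurableSet_Ioo, Measure.restrict_restrict measurableSet_Ioo, hss]
    have h2 : ∀ y ∈ Ioo (Real.sqrt a) (Real.sqrt b),
        y ^ (2 * k - 1) * ((y ^ 2) ^ k)⁻¹ = y⁻¹ := by
      intro y hy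
      have hy0 : (0:ℝ) < y := hra.trans hy.1
      have h2k : 2 * k = (2 * k - 1) + 1 := (Nat.succ_pred_eq_of_pos (by omega)).symm
      have hk2 : (y ^ 2) ^ k = y ^ (2 * k - 1) * y := by
        conv_lhs => rw [← pow_mul, h2k]
        rw [pow_succ]
      rw [hk2, mul_inv, ← mul_assoc, mul_inv_cancel₀ (pow_ne_zero _ hy0.ne'), one_mul]
    rw [setIntegral_congr_fun measurableSet_Ioo h2, ← integral_Ioc_eq_integral_Ioo,
      ← intervalIntegral.integral_of_le (Real.sqrt_lt_sqrt ha.le hab).le]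
    · exact integral_inv_of_pos hra hrb
  have hV : (volume (ball (0 : EuclideanSpace ℝ (Fin k ⊕ Fin k)) 1)).toReal
      = Real.pi ^ k / (Nat.factorial k) := by
    rw [EuclideanSpace.volume_ball, hcard]
    have hval : Real.sqrt Real.pi ^ (2 * k) / Real.Gamma ((2 * k : ℕ) / 2 + 1)
        = Real.pi ^ k / (Nat.factorial k) := by
      have h1 : Real.sqrt Real.pi ^ (2 * k) = Real.pi ^ k := by
        rw [pow_mul, Real.sq_sqrt Real.pi_pos.le]
      have h2 : ((2 * k : ℕ) : ℝ) / 2 + 1 = (k : ℝ) + 1 := by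
        push_cast; ring
      rw [h1, h2, Real.Gamma_nat_eq_factorial]
    rw [ENNReal.ofReal_one, one_pow, one_mul, hval,
      ENNReal.toReal_ofReal (by positivity)]
  rw [measureReal_def, hV, hJ, nsmul_eq_mul, smul_eq_mul]
  push_cast
  ring

lemma ohsawa_mass_shell (k : ℕ) (hk : 1 ≤ k) (t : ℝ) :
    (∫ z in {z : Fin k → ℂ | Real.exp (t / k) < ∑ i, Complex.normSq (z i) ∧
        (∑ i, Complex.normSq (z i)) < Real.exp ((t + 1) / k)},
      ((∑ i, Complex.normSq (z i)) ^ k)⁻¹)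
      = Real.pi ^ k / ((k : ℝ) * (Nat.factorial (k - 1) : ℝ)) := by
  have hk0 : (0 : ℝ) < k := by exact_mod_cast hk
  have hab : Real.exp (t / k) < Real.exp ((t + 1) / k) := by
    apply Real.exp_lt_exp.2
    rw [div_lt_div_iff₀ hk0 hk0]
    nlinarith
  rw [ohsawa_mass k hk (Real.exp_pos _) hab]
  rw [← Real.exp_half, ← Real.exp_half, ← Real.exp_sub, Real.log_exp]
  have h1 : (t + 1) / k / 2 - t / k / 2 = 1 / (2 * k) := by
    field_simp
    ring
  have h2 : ((Nat.factorial k : ℝ)) = (k : ℝ) * (Nat.factorial (k - 1) : ℝ) := by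
    exact_mod_cast (Nat.mul_factorial_pred (by omega : k ≠ 0)).symm
  rw [h1, h2]
  field_simp

end OhsawaAux

/-- The Ohsawa measure of the pair `(ℂᵏ, k·log(|z₁|²+⋯+|z_k|²))` on the point `{0}`:
the limit of the shell integrals equals `(πᵏ/(k·(k-1)!)) · g 0`. -/
theorem stmt1 (k : ℕ) (hk : 1 ≤ k) (g : (Fin k → ℂ) → ℝ) (hg : Continuous g)
    (hsupp : HasCompactSupport g) :
    Tendsto
      (fun t : ℝ =>
        ∫ z in {z : Fin k → ℂ |
            Real.exp (t / k) < ∑ i, Complex.normSq (z i) ∧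
            (∑ i, Complex.normSq (z i)) < Real.exp ((t + 1) / k)},
          g z * (∑ i, Complex.normSq (z i)) ^ (-(k : ℤ)))
      atBot (𝓝 (Real.pi ^ k / ((k : ℝ) * (Nat.factorial (k - 1) : ℝ)) * g 0)) := by
  have hk0 : (0 : ℝ) < k := by exact_mod_cast hk
  set C : ℝ := Real.pi ^ k / ((k : ℝ) * (Nat.factorial (k - 1) : ℝ)) with hC
  have hCpos : 0 < C :=
    div_pos (pow_pos Real.pi_pos k)
      (mul_pos hk0 (by exact_mod_cast (Nat.factorial_pos (k - 1))))
  have hQ : Continuous fun z : Fin k → ℂ => ∑ i, Complex.normSq (z i) :=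
    continuous_finset_sum _ fun i _ => Complex.continuous_normSq.comp (continuous_apply i)
  obtain ⟨M, hM⟩ := hsupp.exists_bound_of_continuous hg
  have hM0 : 0 ≤ M := (norm_nonneg (g 0)).trans (hM 0)
  simp only [zpow_neg, zpow_natCast]
  rw [Metric.tendsto_nhds]
  intro ε hε
  set ε' : ℝ := ε / (2 * (C + 1)) with hε'
  have hε'pos : 0 < ε' := by positivity
  obtain ⟨δ, hδ0, hδ⟩ := Metric.continuousAt_iff.1 (hg.continuousAt (x := 0)) ε' hε'pos
  have htend : Tendsto (fun t : ℝ => Real.exp ((t + 1) / k)) atBot (𝓝 0) :=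
    Real.tendsto_exp_atBot.comp
      ((tendsto_atBot_add_const_right _ 1 tendsto_id).atBot_div_const hk0)
  filter_upwards [htend.eventually_lt_const (show (0:ℝ) < δ ^ 2 by positivity)] with t ht
  set a : ℝ := Real.exp (t / k) with hA
  set b : ℝ := Real.exp ((t + 1) / k) with hB
  have ha : 0 < a := Real.exp_pos _
  have hab : a < b := by
    apply Real.exp_lt_exp.2
    rw [div_lt_div_iff₀ hk0 hk0]
    nlinarith
  set S : Set (Fin k → ℂ) := {z : Fin k → ℂ | a < ∑ i, Complex.normSq (z i) ∧
      (∑ i, Complex.normSq (z i)) < b} with hSdef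
  have hSmeas : MeasurableSet S := by
    have : S = (fun z : Fin k → ℂ => ∑ i, Complex.normSq (z i)) ⁻¹' Ioo a b := rfl
    rw [this]
    exact hQ.measurable measurableSet_Ioo
  -- every point of `S` is within `δ` of `0`
  have hSd : ∀ z ∈ S, dist z 0 < δ := by
    intro z hz
    rw [dist_zero_right]
    rw [pi_norm_lt_iff hδ0]
    intro i
    have h1 : Complex.normSq (z i) ≤ ∑ j, Complex.normSq (z j) :=
      Finset.single_le_sum (fun j _ => Complex.normSq_nonneg (z j)) (Finset.mem_univ i)
    have h2 : ‖z i‖ ^ 2 < δ ^ 2 := by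
      rw [Complex.sq_norm]
      exact lt_of_le_of_lt h1 (hz.2.trans ht)
    exact lt_of_pow_lt_pow_left₀ 2 hδ0.le h2
  -- basic integrability facts
  have hwmeas : Measurable fun z : Fin k → ℂ => ((∑ i, Complex.normSq (z i)) ^ k)⁻¹ :=
    (hQ.measurable.pow_const k).inv
  have hSfin : volume S ≠ ⊤ := by
    refine ne_top_of_le_ne_top (measure_closedBall_lt_top (x := (0 : Fin k → ℂ)) (r := δ)).ne
      (measure_mono fun z hz => ?_)
    exact mem_closedBall.2 (hSd z hz).le
  have hwle : ∀ z ∈ S, ‖((∑ i, Complex.normSq (z i)) ^ k)⁻¹‖ ≤ (a ^ k)⁻¹ := by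
    intro z hz
    have hQpos : 0 < ∑ i, Complex.normSq (z i) := ha.trans hz.1
    rw [Real.norm_eq_abs, abs_of_nonneg (by positivity)]
    exact inv_anti₀ (by positivity) (pow_le_pow_left₀ ha.le hz.1.le k)
  have int_w : IntegrableOn (fun z : Fin k → ℂ => ((∑ i, Complex.normSq (z i)) ^ k)⁻¹) S := by
    refine Measure.integrableOn_of_bounded (M := (a ^ k)⁻¹) hSfin hwmeas.aestronglyMeasurable ?_
    exact (ae_restrict_iff' hSmeas).2 (Eventually.of_forall hwle)
  have int_gw : IntegrableOn
      (fun z : Fin k → ℂ => g z * ((∑ i, Complex.normSq (z i)) ^ k)⁻¹) S := by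
    refine Measure.integrableOn_of_bounded (M := M * (a ^ k)⁻¹) hSfin
      (hg.aestronglyMeasurable.mul hwmeas.aestronglyMeasurable) ?_
    refine (ae_restrict_iff' hSmeas).2 (Eventually.of_forall fun z hz => ?_)
    rw [norm_mul]
    exact mul_le_mul (hM z) (hwle z hz) (norm_nonneg _) hM0
  have hmass : (∫ z in S, ((∑ i, Complex.normSq (z i)) ^ k)⁻¹) = C :=
    ohsawa_mass_shell k hk t
  have hsub : (∫ z in S, (g z - g 0) * ((∑ i, Complex.normSq (z i)) ^ k)⁻¹)
      = (∫ z in S, g z * ((∑ i, Complex.normSq (z i)) ^ k)⁻¹) - C * g 0 := by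
    have heq : (fun z : Fin k → ℂ => (g z - g 0) * ((∑ i, Complex.normSq (z i)) ^ k)⁻¹)
        = fun z => g z * ((∑ i, Complex.normSq (z i)) ^ k)⁻¹
            - g 0 * ((∑ i, Complex.normSq (z i)) ^ k)⁻¹ := by
      funext z; ring
    rw [heq, integral_sub int_gw (int_w.const_mul _), integral_const_mul, hmass]
    ring
  rw [Real.dist_eq]
  have key : |(∫ z in S, g z * ((∑ i, Complex.normSq (z i)) ^ k)⁻¹) - C * g 0| ≤ ε' * C := by
    rw [← hsub, ← Real.norm_eq_abs]
    calc ‖∫ z in S, (g z - g 0) * ((∑ i, Complex.normSq (z i)) ^ k)⁻¹‖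
        ≤ ∫ z in S, ε' * ((∑ i, Complex.normSq (z i)) ^ k)⁻¹ := by
          refine norm_integral_le_of_norm_le (int_w.const_mul _) ?_
          refine (ae_restrict_iff' hSmeas).2 (Eventually.of_forall fun z hz => ?_)
          have hQpos : 0 < ∑ i, Complex.normSq (z i) := ha.trans hz.1
          rw [norm_mul, Real.norm_eq_abs ((((∑ i, Complex.normSq (z i))) ^ k)⁻¹),
            abs_of_nonneg (by positivity : (0:ℝ) ≤ ((∑ i, Complex.normSq (z i)) ^ k)⁻¹)]
          refine mul_le_mul_of_nonneg_right ?_ (by positivity)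
          have := hδ (hSd z hz)
          rw [Real.dist_eq] at this
          simpa [Real.norm_eq_abs] using this.le
      _ = ε' * C := by rw [integral_const_mul, hmass]
  refine lt_of_le_of_lt key ?_
  rw [hε']
  rw [div_mul_eq_mul_div, div_lt_iff₀ (by positivity)]
  nlinarith
end

section
/- Let Ψ(x, y) = log|x|² + log|y|² on ℂ². Let g : ℂ² → ℝ be a continuous, compactly supported, nonnegative function with g(0,0) > 0. Then lim_{t → -∞} ∫_{t < Ψ < t+1} g(x,y) e^{-Ψ(x,y)} dλ(x,y) = +∞ (in particular, no finite limit exists for such g). -/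
open MeasureTheory Filter Set
open scoped Topology Pointwise

noncomputable section
namespace Stmt8

/-- open annulus in ℂ -/
def ann (s r : ℝ) : Set ℂ := {x | s < ‖x‖ ∧ ‖x‖ < r}

lemma isOpen_ann (s r : ℝ) : IsOpen (ann s r) := by
  have : ann s r = ((fun x : ℂ => ‖x‖) ⁻¹' (Set.Ioo s r)) := by
    ext x; simp [ann, Set.mem_Ioo]
  rw [this]
  exact isOpen_Ioo.preimage continuous_norm

lemma measurableSet_ann (s r : ℝ) : MeasurableSet (ann s r) :=
  (isOpen_ann s r).measurableSet

/-- closed annulus -/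
def cann (s r : ℝ) : Set ℂ := {x | s ≤ ‖x‖ ∧ ‖x‖ ≤ r}

lemma isCompact_cann (s r : ℝ) : IsCompact (cann s r) := by
  have hc : IsClosed (cann s r) := by
    have : cann s r = ((fun x : ℂ => ‖x‖) ⁻¹' (Set.Icc s r)) := by
      ext x; simp [cann, Set.mem_Icc]
    rw [this]
    exact isClosed_Icc.preimage continuous_norm
  apply Metric.isCompact_of_isClosed_isBounded hc
  apply Bornology.IsBounded.subset (Metric.isBounded_closedBall (x := (0:ℂ)) (r := r))
  intro x hx
  simpa [Complex.dist_eq] using hx.2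

lemma ann_subset_cann (s r : ℝ) : ann s r ⊆ cann s r := fun x hx => ⟨hx.1.le, hx.2.le⟩

lemma integrableOn_inv_normSq {s r : ℝ} (hs : 0 < s) :
    IntegrableOn (fun x => (Complex.normSq x)⁻¹) (ann s r) := by
  apply IntegrableOn.mono_set _ (ann_subset_cann s r)
  apply ContinuousOn.integrableOn_compact (isCompact_cann s r)
  apply ContinuousOn.inv₀ Complex.continuous_normSq.continuousOn
  intro x hx
  have : 0 < ‖x‖ := lt_of_lt_of_le hs hx.1
  simpa [Complex.normSq_pos] using (norm_pos_iff.mp this)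

lemma smul_ann {R s r : ℝ} (hR : 0 < R) : R • ann s r = ann (R * s) (R * r) := by
  ext x
  rw [Set.mem_smul_set_iff_inv_smul_mem₀ (ne_of_gt hR)]
  simp only [ann, Set.mem_setOf_eq]
  have habs : ‖R⁻¹ • x‖ = R⁻¹ * ‖x‖ := by
    rw [norm_smul, Real.norm_eq_abs,
      abs_of_pos (inv_pos.mpr hR)]
  rw [habs]
  constructor
  · rintro ⟨h1, h2⟩
    constructor
    · calc R * s < R * (R⁻¹ * ‖x‖) := by
            exact (mul_lt_mul_iff_right₀ hR).mpr h1
        _ = ‖x‖ := by field_simp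
    · calc ‖x‖ = R * (R⁻¹ * ‖x‖) := by field_simp
        _ < R * r := (mul_lt_mul_iff_right₀ hR).mpr h2
  · rintro ⟨h1, h2⟩
    constructor
    · have := (mul_lt_mul_iff_right₀ (inv_pos.mpr hR)).mpr h1
      calc s = R⁻¹ * (R * s) := by field_simp
        _ < R⁻¹ * ‖x‖ := this
    · have := (mul_lt_mul_iff_right₀ (inv_pos.mpr hR)).mpr h2
      calc R⁻¹ * ‖x‖ < R⁻¹ * (R * r) := this
        _ = r := by field_simp


lemma scale_inv {R s r : ℝ} (hR : 0 < R) :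
    ∫ x in ann (R * s) (R * r), (Complex.normSq x)⁻¹ =
      ∫ x in ann s r, (Complex.normSq x)⁻¹ := by
  have h := MeasureTheory.Measure.setIntegral_comp_smul_of_pos (μ := (volume : Measure ℂ))
    (fun x => (Complex.normSq x)⁻¹) (ann s r) hR
  rw [smul_ann hR] at h
  have hlhs : ∫ x in ann s r, (Complex.normSq (R • x))⁻¹ =
      (R ^ 2)⁻¹ * ∫ x in ann s r, (Complex.normSq x)⁻¹ := by
    rw [← integral_const_mul]
    congr 1
    ext x
    have : Complex.normSq (R • x) = R ^ 2 * Complex.normSq x := by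
      have : (R : ℂ) * x = R • x := by simp [Complex.real_smul]
      rw [← this, Complex.normSq_mul]
      simp [Complex.normSq_ofReal, sq]
    rw [this, mul_inv]
  rw [hlhs, Complex.finrank_real_complex, smul_eq_mul] at h
  have hR2 : ((R ^ 2 : ℝ))⁻¹ ≠ 0 := by positivity
  exact (mul_left_cancel₀ hR2 h).symm

/-- the base constant -/
def δ0 : ℝ := ∫ x in ann 1 (Real.exp (1/8)), (Complex.normSq x)⁻¹

lemma δ0_pos : 0 < δ0 := by
  have hlt : (1:ℝ) < Real.exp (1/8) := by
    rw [← Real.exp_zero]; exact Real.exp_lt_exp.mpr (by norm_num)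
  have hne : (ann 1 (Real.exp (1/8))).Nonempty := by
    set a : ℝ := (1 + Real.exp (1/8))/2 with ha
    have hapos : 0 < a := by rw [ha]; positivity
    have habs : ‖(a : ℂ)‖ = a := by
      simp [abs_of_pos hapos]
    exact ⟨(a : ℂ), by rw [ann, Set.mem_setOf_eq, habs]; constructor <;> (rw [ha]; linarith)⟩
  have hvolpos : 0 < volume (ann 1 (Real.exp (1/8))) :=
    (isOpen_ann _ _).measure_pos volume hne
  have hvolfin : volume (ann 1 (Real.exp (1/8))) ≠ ⊤ := by
    exact ne_top_of_le_ne_top (isCompact_cann 1 (Real.exp (1/8))).measure_lt_top.ne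
      (measure_mono (ann_subset_cann _ _))
  have key := MeasureTheory.setIntegral_ge_of_const_le_real (μ := (volume : Measure ℂ))
    (c := (Real.exp (1/4))⁻¹) (measurableSet_ann _ _) hvolfin
    (fun x hx => ?_) (integrableOn_inv_normSq one_pos)
  · refine lt_of_lt_of_le ?_ key
    apply mul_pos (by positivity)
    exact ENNReal.toReal_pos hvolpos.ne' hvolfin
  · have h1 : ‖x‖ < Real.exp (1/8) := hx.2
    have h2 : 0 < ‖x‖ := lt_trans one_pos hx.1
    have : Complex.normSq x < Real.exp (1/4) := by
      rw [← Complex.sq_norm]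
      calc ‖x‖ ^ 2 < Real.exp (1/8) ^ 2 := by
            apply sq_lt_sq' (by linarith) h1
        _ = Real.exp (1/4) := by
            rw [sq, ← Real.exp_add]; norm_num
    have hpos : 0 < Complex.normSq x := by
      rw [← Complex.sq_norm]; positivity
    exact le_of_lt ((inv_lt_inv₀ (Real.exp_pos _) hpos).mpr this)

/-- annulus with normSq range (exp a, exp (a+1/4)) -/
def annE (a : ℝ) : Set ℂ := ann (Real.exp (a/2)) (Real.exp (a/2) * Real.exp (1/8))

lemma integral_annE (a : ℝ) : ∫ x in annE a, (Complex.normSq x)⁻¹ = δ0 := by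
  have h := scale_inv (R := Real.exp (a/2)) (s := 1) (r := Real.exp (1/8)) (Real.exp_pos _)
  rw [mul_one] at h
  exact h

lemma mem_annE {a : ℝ} {x : ℂ} (hx : x ∈ annE a) :
    Real.exp a < Complex.normSq x ∧ Complex.normSq x < Real.exp (a + 1/4) := by
  obtain ⟨h1, h2⟩ := hx
  have hx0 : 0 ≤ ‖x‖ := norm_nonneg x
  constructor
  · have : Real.exp (a/2) ^ 2 < ‖x‖ ^ 2 :=
      pow_lt_pow_left₀ h1 (Real.exp_pos _).le (by norm_num)
    rw [Complex.sq_norm] at this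
    calc Real.exp a = Real.exp (a/2) ^ 2 := by rw [sq, ← Real.exp_add]; ring_nf
      _ < Complex.normSq x := this
  · have : ‖x‖ ^ 2 < (Real.exp (a/2) * Real.exp (1/8)) ^ 2 :=
      pow_lt_pow_left₀ h2 hx0 (by norm_num)
    rw [Complex.sq_norm] at this
    calc Complex.normSq x < (Real.exp (a/2) * Real.exp (1/8)) ^ 2 := this
      _ = Real.exp (a + 1/4) := by
          rw [← Real.exp_add, sq, ← Real.exp_add]; ring_nf

lemma box_integral (c0 a b : ℝ) :
    ∫ p in (annE a ×ˢ annE b), c0 / (Complex.normSq p.1 * Complex.normSq p.2) =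
      c0 * (δ0 * δ0) := by
  have heq : ∀ p : ℂ × ℂ, c0 / (Complex.normSq p.1 * Complex.normSq p.2)
      = (c0 * (Complex.normSq p.1)⁻¹) * (Complex.normSq p.2)⁻¹ := by
    intro p; rw [div_eq_mul_inv, mul_inv, ← mul_assoc]
  simp_rw [heq]
  have hprod := MeasureTheory.setIntegral_prod_mul (μ := (volume : Measure ℂ))
    (ν := (volume : Measure ℂ)) (fun x : ℂ => c0 * (Complex.normSq x)⁻¹)
    (fun y : ℂ => (Complex.normSq y)⁻¹) (annE a) (annE b)
  rw [MeasureTheory.Measure.volume_eq_prod, hprod,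
    MeasureTheory.integral_const_mul, integral_annE, integral_annE]
  ring

lemma integrableOn_box (h : ℂ × ℂ → ℝ) (hh : Continuous h) (a b : ℝ) :
    IntegrableOn (fun p => h p / (Complex.normSq p.1 * Complex.normSq p.2))
      (annE a ×ˢ annE b) := by
  apply IntegrableOn.mono_set (t := cann (Real.exp (a/2)) (Real.exp (a/2) * Real.exp (1/8)) ×ˢ
    cann (Real.exp (b/2)) (Real.exp (b/2) * Real.exp (1/8)))
  · apply ContinuousOn.integrableOn_compact ((isCompact_cann _ _).prod (isCompact_cann _ _))
    apply ContinuousOn.div hh.continuousOn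
    · exact (Complex.continuous_normSq.comp continuous_fst).mul
        (Complex.continuous_normSq.comp continuous_snd) |>.continuousOn
    · rintro ⟨x, y⟩ ⟨hx, hy⟩
      have hx0 : 0 < ‖x‖ := lt_of_lt_of_le (Real.exp_pos _) hx.1
      have hy0 : 0 < ‖y‖ := lt_of_lt_of_le (Real.exp_pos _) hy.1
      have : 0 < Complex.normSq x * Complex.normSq y := by
        apply mul_pos <;> rw [← Complex.sq_norm] <;> positivity
      exact this.ne'
  · exact Set.prod_mono (ann_subset_cann _ _) (ann_subset_cann _ _)

lemma box_lower {g : ℂ × ℂ → ℝ} (hg : Continuous g) {c0 a b : ℝ}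
    (hge : ∀ p ∈ annE a ×ˢ annE b, c0 ≤ g p) :
    c0 * (δ0 * δ0) ≤
      ∫ p in annE a ×ˢ annE b, g p / (Complex.normSq p.1 * Complex.normSq p.2) := by
  rw [← box_integral c0 a b]
  apply MeasureTheory.setIntegral_mono_on
  · exact integrableOn_box (fun _ => c0) continuous_const a b
  · exact integrableOn_box g hg a b
  · exact (((isOpen_ann _ _).prod (isOpen_ann _ _))).measurableSet
  · rintro ⟨x, y⟩ hp
    have hx := mem_annE hp.1
    have hy := mem_annE hp.2
    have hpos : 0 < Complex.normSq x * Complex.normSq y :=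
      mul_pos (lt_trans (Real.exp_pos _) hx.1) (lt_trans (Real.exp_pos _) hy.1)
    exact (div_le_div_iff_of_pos_right hpos).mpr (hge _ hp)

lemma annE_disj {u v : ℝ} (h : u + 1/4 ≤ v) : Disjoint (annE u) (annE v) := by
  rw [Set.disjoint_left]
  intro x hu hv
  have h1 := (mem_annE hu).2
  have h2 := (mem_annE hv).1
  have h3 := Real.exp_le_exp.mpr h
  linarith

end Stmt8

open Stmt8

/-- The Ohsawa measure is infinite near intersections of log canonical centers:
for `Ψ(x,y) = log|x|² + log|y|²` on `ℂ²` and `g ≥ 0` continuous with compact support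
and `g(0,0) > 0`, the defining limits tend to `+∞`. -/
theorem stmt8 (g : ℂ × ℂ → ℝ) (hg : Continuous g) (hsupp : HasCompactSupport g)
    (hpos : ∀ p, 0 ≤ g p) (h0 : 0 < g (0, 0)) :
    Tendsto
      (fun t : ℝ =>
        ∫ p in {p : ℂ × ℂ |
            Real.exp t < Complex.normSq p.1 * Complex.normSq p.2 ∧
            Complex.normSq p.1 * Complex.normSq p.2 < Real.exp (t + 1)},
          g p / (Complex.normSq p.1 * Complex.normSq p.2))
      atBot atTop := by
  classical
  set f : ℂ × ℂ → ℝ := fun p => g p / (Complex.normSq p.1 * Complex.normSq p.2) with hf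
  set S : ℝ → Set (ℂ × ℂ) := fun t => {p : ℂ × ℂ |
      Real.exp t < Complex.normSq p.1 * Complex.normSq p.2 ∧
      Complex.normSq p.1 * Complex.normSq p.2 < Real.exp (t + 1)} with hS
  have hfnn : ∀ p, 0 ≤ f p := fun p =>
    div_nonneg (hpos p) (mul_nonneg (Complex.normSq_nonneg _) (Complex.normSq_nonneg _))
  -- continuity of the denominator
  have hq : Continuous (fun p : ℂ × ℂ => Complex.normSq p.1 * Complex.normSq p.2) :=
    (Complex.continuous_normSq.comp continuous_fst).mul
      (Complex.continuous_normSq.comp continuous_snd)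
  have hSopen : ∀ t, IsOpen (S t) := by
    intro t
    have : S t = (fun p : ℂ × ℂ => Complex.normSq p.1 * Complex.normSq p.2) ⁻¹'
        (Set.Ioo (Real.exp t) (Real.exp (t + 1))) := by
      ext p; simp [hS, Set.mem_Ioo]
    rw [this]
    exact isOpen_Ioo.preimage hq
  -- find a ball where g ≥ c0
  obtain ⟨ε, hεpos, hball⟩ : ∃ ε > 0, ∀ p : ℂ × ℂ, dist p 0 < ε → g (0,0) / 2 ≤ g p := by
    have hU : IsOpen (g ⁻¹' Set.Ioi (g (0,0) / 2)) :=
      (isOpen_Ioi).preimage hg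
    have h0U : ((0:ℂ), (0:ℂ)) ∈ g ⁻¹' Set.Ioi (g (0,0) / 2) := by
      simp only [Set.mem_preimage, Set.mem_Ioi]; linarith
    obtain ⟨ε, hε, hb⟩ := Metric.isOpen_iff.mp hU _ h0U
    exact ⟨ε, hε, fun p hp => le_of_lt (hb (Metric.mem_ball.mpr hp))⟩
  set c0 : ℝ := g (0,0) / 2 with hc0
  have hc0pos : 0 < c0 := by rw [hc0]; linarith
  set m : ℝ := min (2 * Real.log ε - 1/4) (-1) with hm
  have hm1 : m ≤ -1 := min_le_right _ _
  have hm2 : m ≤ 2 * Real.log ε - 1/4 := min_le_left _ _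
  set A : ℝ := c0 * (δ0 * δ0) with hA
  have hApos : 0 < A := mul_pos hc0pos (mul_pos δ0_pos δ0_pos)
  -- membership in ball for annE pieces
  have hball' : ∀ a b : ℝ, a ≤ m → b ≤ m → ∀ p ∈ annE a ×ˢ annE b, c0 ≤ g p := by
    intro a b ha hb p hp
    apply hball
    have habs : ∀ (u : ℝ) (x : ℂ), u ≤ m → x ∈ annE u → dist x 0 < ε := by
      intro u x hu hx
      have h2 := hx.2
      have : Real.exp (u/2) * Real.exp (1/8) ≤ ε := by
        rw [← Real.exp_add]
        calc Real.exp (u/2 + 1/8) ≤ Real.exp (Real.log ε) := by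
              apply Real.exp_le_exp.mpr; linarith
          _ = ε := Real.exp_log hεpos
      rw [Complex.dist_eq, sub_zero]
      exact lt_of_lt_of_le h2 this
    rw [Prod.dist_eq, max_lt_iff]
    exact ⟨habs a p.1 ha hp.1, habs b p.2 hb hp.2⟩
  -- the boxes
  set a : ℕ → ℝ := fun k => m - (k+1)/4 with ha
  set b : ℝ → ℕ → ℝ := fun t k => t + 1/4 - a k with hb
  set B : ℝ → ℕ → Set (ℂ × ℂ) := fun t k => annE (a k) ×ˢ annE (b t k) with hB
  -- boxes are inside S t
  have hBsub : ∀ t k, B t k ⊆ S t := by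
    intro t k p hp
    obtain ⟨hx1, hx2⟩ := mem_annE hp.1
    obtain ⟨hy1, hy2⟩ := mem_annE hp.2
    have hab : a k + b t k = t + 1/4 := by rw [hb]; ring
    have e1 : Real.exp (a k) * Real.exp (b t k) = Real.exp (t + 1/4) := by
      rw [← Real.exp_add, hab]
    have e2 : Real.exp (a k + 1/4) * Real.exp (b t k + 1/4) = Real.exp (t + 3/4) := by
      rw [← Real.exp_add]; congr 1; linarith
    have hx0 : 0 < Complex.normSq p.1 := lt_trans (Real.exp_pos _) hx1
    have hy0 : 0 < Complex.normSq p.2 := lt_trans (Real.exp_pos _) hy1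
    constructor
    · have : Real.exp (t + 1/4) < Complex.normSq p.1 * Complex.normSq p.2 := by
        rw [← e1]
        exact mul_lt_mul hx1 hy1.le (Real.exp_pos _) hx0.le
      have ht : Real.exp t < Real.exp (t + 1/4) := Real.exp_lt_exp.mpr (by linarith)
      linarith
    · have : Complex.normSq p.1 * Complex.normSq p.2 < Real.exp (t + 3/4) := by
        rw [← e2]
        exact mul_lt_mul hx2 hy2.le hy0 (Real.exp_pos _).le
      have ht : Real.exp (t + 3/4) < Real.exp (t + 1) := Real.exp_lt_exp.mpr (by linarith)
      linarith
  -- integrability of f on S t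
  have hfmeas : AEStronglyMeasurable f volume := by
    apply Measurable.aestronglyMeasurable
    exact hg.measurable.div hq.measurable
  have hint : ∀ t : ℝ, IntegrableOn f (S t) volume := by
    intro t
    set K := tsupport g with hK
    have hKc : IsCompact K := hsupp
    have hKm : MeasurableSet K := (isClosed_tsupport g).measurableSet
    obtain ⟨C, hC⟩ := hsupp.exists_bound_of_continuous hg
    have h1 : IntegrableOn f (S t ∩ K) volume := by
      apply MeasureTheory.Measure.integrableOn_of_bounded (M := C * (Real.exp t)⁻¹)
      · exact ne_top_of_le_ne_top hKc.measure_lt_top.ne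
          (measure_mono Set.inter_subset_right)
      · exact hfmeas
      · apply MeasureTheory.ae_restrict_of_forall_mem ((hSopen t).measurableSet.inter hKm)
        intro p hp
        have hd : Real.exp t < Complex.normSq p.1 * Complex.normSq p.2 := hp.1.1
        have hd0 : (0:ℝ) < Real.exp t := Real.exp_pos _
        rw [Real.norm_eq_abs, abs_of_nonneg (hfnn p)]
        calc f p ≤ g p / Real.exp t := by
              apply div_le_div_of_nonneg_left (hpos p) hd0 hd.le
          _ ≤ C / Real.exp t := by
              apply (div_le_div_iff_of_pos_right hd0).mpr
              calc g p ≤ |g p| := le_abs_self _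
                _ ≤ C := hC p
          _ = C * (Real.exp t)⁻¹ := div_eq_mul_inv _ _
    have h2 : IntegrableOn f (S t \ K) volume := by
      apply (MeasureTheory.integrableOn_zero (μ := (volume : Measure (ℂ × ℂ)))).congr_fun
        ?_ ((hSopen t).measurableSet.diff hKm)
      intro p hp
      have : g p = 0 := image_eq_zero_of_notMem_tsupport hp.2
      simp [hf, this]
    have := h1.union h2
    rwa [Set.inter_union_diff] at this
  -- the main lower bound
  have key : ∀ t : ℝ, t ≤ (8*m - 1)/3 →
      (⌊-t⌋₊ : ℝ) * A ≤ ∫ p in S t, f p := by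
    intro t ht
    set n : ℕ := ⌊-t⌋₊ with hn
    have htneg : (0:ℝ) ≤ -t := by nlinarith [hm1]
    have hnle : (n : ℝ) ≤ -t := Nat.floor_le htneg
    -- each index k < n gives a valid box
    have hak : ∀ k, a k ≤ m := by
      intro k; rw [ha]; simp only
      have : (0:ℝ) ≤ k := Nat.cast_nonneg k
      linarith
    have hbk : ∀ k, k < n → b t k ≤ m := by
      intro k hk
      have hkr : (k:ℝ) ≤ (n:ℝ) - 1 := by
        have : (k:ℝ) + 1 ≤ (n:ℝ) := by exact_mod_cast hk
        linarith
      have : (k:ℝ) ≤ -t - 1 := by linarith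
      rw [hb, ha]; simp only
      nlinarith [ht]
    -- boxes pairwise disjoint
    have hdisj : Set.Pairwise ↑(Finset.range n) (Function.onFun Disjoint (B t)) := by
      intro i _ j _ hij
      have hwlog : ∀ i j : ℕ, i < j → Disjoint (B t i) (B t j) := by
        intro i j hlt
        have haij : a j + 1/4 ≤ a i := by
          rw [ha]; simp only
          have : (i:ℝ) + 1 ≤ (j:ℝ) := by exact_mod_cast hlt
          linarith
        have hd := annE_disj haij
        rw [Set.disjoint_left] at hd ⊢
        intro p hpi hpj
        exact hd hpj.1 hpi.1
      rcases lt_or_gt_of_ne hij with h | h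
      · exact hwlog i j h
      · exact (hwlog j i h).symm
    have hBmeas : ∀ k, MeasurableSet (B t k) := fun k =>
      ((isOpen_ann _ _).prod (isOpen_ann _ _)).measurableSet
    have hBint : ∀ k, IntegrableOn f (B t k) volume := fun k =>
      integrableOn_box g hg _ _
    calc (n:ℝ) * A = ∑ _k ∈ Finset.range n, A := by
          rw [Finset.sum_const, Finset.card_range, nsmul_eq_mul]
      _ ≤ ∑ k ∈ Finset.range n, ∫ p in B t k, f p := by
          apply Finset.sum_le_sum
          intro k hk
          rw [hA]
          exact box_lower hg (hball' _ _ (hak k) (hbk k (Finset.mem_range.mp hk)))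
      _ = ∫ p in ⋃ k ∈ Finset.range n, B t k, f p := by
          rw [MeasureTheory.integral_biUnion_finset (Finset.range n)
            (fun k _ => hBmeas k) hdisj (fun k _ => hBint k)]
      _ ≤ ∫ p in S t, f p := by
          apply MeasureTheory.setIntegral_mono_set (hint t)
            (Filter.Eventually.of_forall hfnn)
          apply HasSubset.Subset.eventuallyLE
          intro p hp
          simp only [Set.mem_iUnion] at hp
          obtain ⟨k, _, hpk⟩ := hp
          exact hBsub t k hpk
  -- conclude
  have hlow : Tendsto (fun t : ℝ => (⌊-t⌋₊ : ℝ) * A) atBot atTop := by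
    have h1 : Tendsto (fun t : ℝ => -t) atBot atTop := tendsto_neg_atBot_atTop
    have h2 : Tendsto (fun t : ℝ => (⌊-t⌋₊ : ℝ)) atBot atTop :=
      tendsto_natCast_atTop_atTop.comp (tendsto_nat_floor_atTop.comp h1)
    exact h2.atTop_mul_const hApos
  apply tendsto_atTop_mono' atBot ?_ hlow
  rw [Filter.EventuallyLE, Filter.eventually_atBot]
  exact ⟨(8*m - 1)/3, fun t ht => key t ht⟩
end
end

section
/- Let Ψ(x, y) = log|x|² + log|y|² on ℂ². Let g : ℂ² → ℝ be a continuous compactly supported function whose support is disjoint from the y-axis {x = 0}. Then the limit as t → -∞ of ∫_{t < Ψ < t+1} g(x,y) e^{-Ψ(x,y)} dλ(x,y) exists and equals π ∫_ℂ g(x, 0) |x|^{-2} dλ(x). -/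
open MeasureTheory Filter Set
open scoped Topology NNReal ENNReal

lemma map_scale_snd (c : ℝ) (hc : 0 < c) :
    Measure.map (fun p : ℂ × ℂ => (p.1, c • p.2)) (volume : Measure (ℂ × ℂ))
      = ENNReal.ofReal ((c ^ 2)⁻¹) • volume := by
  set k : ℝ≥0 := ((c ^ 2)⁻¹).toNNReal with hk
  have h1 : Measure.map (fun y : ℂ => c • y) volume = k • (volume : Measure ℂ) := by
    rw [MeasureTheory.Measure.map_addHaar_smul volume hc.ne', Complex.finrank_real_complex,
      abs_of_nonneg (by positivity)]
    rfl
  have h2 : (fun p : ℂ × ℂ => (p.1, c • p.2)) = Prod.map id (fun y : ℂ => c • y) := rfl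
  have key : (volume : Measure ℂ).prod (k • (volume : Measure ℂ))
      = k • ((volume : Measure ℂ).prod (volume : Measure ℂ)) := by
    refine Measure.prod_eq fun s t hs ht => ?_
    simp only [Measure.smul_apply, Measure.prod_prod, ENNReal.smul_def, smul_eq_mul]
    ring
  have h3 : ENNReal.ofReal ((c ^ 2)⁻¹) • (volume : Measure (ℂ × ℂ))
      = k • (volume : Measure (ℂ × ℂ)) := rfl
  rw [h3, Measure.volume_eq_prod, h2,
    ← Measure.map_prod_map _ _ measurable_id (measurable_const_smul c),
    Measure.map_id, h1, key]


lemma annulus_integral {a : ℝ} (ha : 0 < a) :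
    ∫ u : ℂ in {u : ℂ | a < Complex.normSq u ∧ Complex.normSq u < Real.exp 1 * a},
      (Complex.normSq u)⁻¹ = Real.pi := by
  have hea : 0 < Real.exp 1 * a := by positivity
  set ra := Real.sqrt a with hra
  set rb := Real.sqrt (Real.exp 1 * a) with hrb
  have hrapos : 0 < ra := Real.sqrt_pos.2 ha
  have hrbpos : 0 < rb := Real.sqrt_pos.2 hea
  have hrab : ra ≤ rb := Real.sqrt_le_sqrt (by nlinarith [Real.add_one_le_exp 1])
  set S : Set ℂ := {u : ℂ | a < Complex.normSq u ∧ Complex.normSq u < Real.exp 1 * a} with hS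
  have hSm : MeasurableSet S := by
    have : S = Complex.normSq ⁻¹' (Ioo a (Real.exp 1 * a)) := rfl
    rw [this]
    exact Complex.continuous_normSq.measurable measurableSet_Ioo
  set f : ℝ → ℝ := (Ioo ra rb).indicator (fun y => (y ^ 2)⁻¹) with hf
  have hfu : ∀ u : ℂ, S.indicator (fun u => (Complex.normSq u)⁻¹) u = f ‖u‖ := by
    intro u
    have hnorm : Complex.normSq u = ‖u‖ ^ 2 := by
      rw [Complex.normSq_eq_norm_sq]
    have hmem : u ∈ S ↔ ‖u‖ ∈ Ioo ra rb := by
      rw [hS, mem_setOf_eq, mem_Ioo, hnorm, hra, hrb]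
      constructor
      · rintro ⟨h1, h2⟩
        refine ⟨?_, ?_⟩
        · rw [← Real.sqrt_sq (norm_nonneg u)]; exact Real.sqrt_lt_sqrt ha.le h1
        · rw [← Real.sqrt_sq (norm_nonneg u)]; exact Real.sqrt_lt_sqrt (sq_nonneg _) h2
      · rintro ⟨h1, h2⟩
        constructor
        · nlinarith [Real.sq_sqrt ha.le, Real.sqrt_nonneg a]
        · nlinarith [Real.sq_sqrt hea.le, Real.sqrt_nonneg (Real.exp 1 * a), norm_nonneg u]
    by_cases h : u ∈ S
    · rw [indicator_of_mem h, hf, indicator_of_mem (hmem.1 h), hnorm]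
    · rw [indicator_of_notMem h, hf, indicator_of_notMem (fun hc => h (hmem.2 hc))]
  rw [← integral_indicator hSm]
  have step1 : ∫ u : ℂ, S.indicator (fun u => (Complex.normSq u)⁻¹) u = ∫ u : ℂ, f ‖u‖ := by
    congr 1; funext u; exact hfu u
  rw [step1, MeasureTheory.integral_fun_norm_addHaar (volume : Measure ℂ) f]
  have hball : ((volume : Measure ℂ) (Metric.ball 0 1)).toReal = Real.pi := by
    rw [Complex.volume_ball]
    simp [ENNReal.toReal_mul]
  have hfr : Module.finrank ℝ ℂ = 2 := Complex.finrank_real_complex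
  rw [hfr, measureReal_def, hball]
  have step2 : ∫ y in Ioi (0:ℝ), y ^ (2 - 1) • f y = (2:ℝ)⁻¹ := by
    have e1 : ∀ y : ℝ, y ^ (2-1) • f y = (Ioo ra rb).indicator (fun y => y * (y ^ 2)⁻¹) y := by
      intro y
      rw [pow_one, smul_eq_mul, hf]
      by_cases h : y ∈ Ioo ra rb
      · rw [indicator_of_mem h, indicator_of_mem h]
      · rw [indicator_of_notMem h, indicator_of_notMem h, mul_zero]
    simp_rw [e1]
    have hsub : Ioo ra rb ⊆ Ioi 0 := fun y hy => lt_trans hrapos hy.1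
    rw [integral_indicator measurableSet_Ioo, Measure.restrict_restrict measurableSet_Ioo,
      inter_eq_left.2 hsub]
    have e2 : ∫ y in Ioo ra rb, y * (y ^ 2)⁻¹ = ∫ y in Ioo ra rb, y⁻¹ := by
      refine setIntegral_congr_fun measurableSet_Ioo fun y hy => ?_
      have hy0 : y ≠ 0 := (lt_trans hrapos hy.1).ne'
      field_simp
    rw [e2, ← integral_Ioc_eq_integral_Ioo, ← intervalIntegral.integral_of_le hrab,
      integral_inv_of_pos hrapos hrbpos]
    rw [hrb, hra, ← Real.sqrt_div hea.le, mul_div_assoc, div_self ha.ne', mul_one,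
      Real.log_sqrt (Real.exp_pos 1).le, Real.log_exp]
    norm_num
  rw [step2]
  simp [nsmul_eq_mul, smul_eq_mul]
  ring



/-- Density `π/|x|²` of the Ohsawa measure of `(ℂ², log|x|² + log|y|²)` on the x-axis
away from the origin: if the support of `g` avoids `{x = 0}`, the defining limit exists
and equals `π ∫_ℂ g(x,0)/|x|² dλ(x)`. -/
theorem stmt9 (g : ℂ × ℂ → ℝ) (hg : Continuous g) (hsupp : HasCompactSupport g)
    (hdisj : Disjoint (tsupport g) {p : ℂ × ℂ | p.1 = 0}) :
    Tendsto
      (fun t : ℝ =>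
        ∫ p in {p : ℂ × ℂ |
            Real.exp t < Complex.normSq p.1 * Complex.normSq p.2 ∧
            Complex.normSq p.1 * Complex.normSq p.2 < Real.exp (t + 1)},
          g p / (Complex.normSq p.1 * Complex.normSq p.2))
      atBot (𝓝 (Real.pi * ∫ x : ℂ, g (x, 0) / Complex.normSq x)) := by
  classical
  set m : ℂ × ℂ → ℝ := fun p => Complex.normSq p.1 * Complex.normSq p.2 with hm
  have hmC : Continuous m :=
    (Complex.continuous_normSq.comp continuous_fst).mul
      (Complex.continuous_normSq.comp continuous_snd)
  set B : Set (ℂ × ℂ) := {p | 1 < m p ∧ m p < Real.exp 1} with hB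
  have hBm : MeasurableSet B := by
    have : B = m ⁻¹' (Ioo 1 (Real.exp 1)) := rfl
    rw [this]; exact hmC.measurable measurableSet_Ioo
  -- constants
  obtain ⟨M, hM⟩ := hsupp.exists_bound_of_continuous hg
  have hM0 : 0 ≤ M := le_trans (norm_nonneg _) (hM (0, 0))
  obtain ⟨δ, hδpos, hδ⟩ : ∃ δ : ℝ, 0 < δ ∧ ∀ p ∈ tsupport g, δ ≤ ‖p.1‖ := by
    rcases eq_empty_or_nonempty (tsupport g) with h | h
    · exact ⟨1, one_pos, fun p hp => absurd hp (h ▸ notMem_empty p)⟩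
    · obtain ⟨p₀, hp₀, hmin⟩ :=
        hsupp.exists_isMinOn h ((continuous_norm.comp continuous_fst).continuousOn)
      refine ⟨‖p₀.1‖, ?_, fun p hp => hmin hp⟩
      have h0 : p₀.1 ≠ 0 := fun h0 => Set.disjoint_left.1 hdisj hp₀ h0
      exact norm_pos_iff.2 h0
  obtain ⟨R, hR⟩ := hsupp.isBounded.exists_norm_le
  -- the transformed families
  set H : ℝ → ℂ × ℂ → ℝ :=
    fun t p => B.indicator (fun p => g (p.1, Real.exp (t / 2) • p.2) / m p) p with hH
  set Hlim : ℂ × ℂ → ℝ := fun p => B.indicator (fun p => g (p.1, 0) / m p) p with hHlim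
  -- Step A: change of variables
  have stepA : ∀ t : ℝ,
      (∫ p in {p : ℂ × ℂ | Real.exp t < m p ∧ m p < Real.exp (t + 1)}, g p / m p)
        = ∫ p, H t p := by
    intro t
    set c : ℝ := Real.exp (t / 2) with hc
    have hcpos : 0 < c := Real.exp_pos _
    have hc2 : c ^ 2 = Real.exp t := by
      rw [sq, ← Real.exp_add]; ring_nf
    set A : Set (ℂ × ℂ) := {p : ℂ × ℂ | Real.exp t < m p ∧ m p < Real.exp (t + 1)} with hA
    have hAm : MeasurableSet A := by
      have : A = m ⁻¹' (Ioo (Real.exp t) (Real.exp (t + 1))) := rfl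
      rw [this]; exact hmC.measurable measurableSet_Ioo
    set Φ : ℂ × ℂ → ℂ × ℂ := fun p => (p.1, c • p.2) with hΦ
    have hΦm : Measurable Φ := measurable_fst.prodMk (measurable_snd.const_smul c)
    have hfm : Measurable (fun p : ℂ × ℂ => A.indicator (fun p => g p / m p) p) :=
      (hg.measurable.div hmC.measurable).indicator hAm
    have hvol : (volume : Measure (ℂ × ℂ))
        = ENNReal.ofReal (Real.exp t) • Measure.map Φ volume := by
      rw [hΦ, map_scale_snd c hcpos, hc2, smul_smul,
        ← ENNReal.ofReal_mul (Real.exp_pos t).le,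
        mul_inv_cancel₀ (Real.exp_pos t).ne', ENNReal.ofReal_one, one_smul]
    rw [← integral_indicator hAm]
    calc ∫ p, A.indicator (fun p => g p / m p) p
        = ∫ p, A.indicator (fun p => g p / m p) p
            ∂(ENNReal.ofReal (Real.exp t) • Measure.map Φ volume) := by rw [← hvol]
      _ = Real.exp t * ∫ p, A.indicator (fun p => g p / m p) p ∂(Measure.map Φ volume) := by
          rw [integral_smul_measure, ENNReal.toReal_ofReal (Real.exp_pos t).le, smul_eq_mul]
      _ = Real.exp t * ∫ p, A.indicator (fun p => g p / m p) (Φ p) := by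
          rw [integral_map hΦm.aemeasurable hfm.aestronglyMeasurable]
      _ = ∫ p, Real.exp t * A.indicator (fun p => g p / m p) (Φ p) := by
          rw [integral_const_mul]
      _ = ∫ p, H t p := by
          congr 1; funext p
          have hmΦ : m (Φ p) = Real.exp t * m p := by
            rw [hΦ, hm]
            simp only
            rw [Complex.real_smul, Complex.normSq_mul, Complex.normSq_ofReal, ← Real.exp_add]
            ring_nf
          have hmem : Φ p ∈ A ↔ p ∈ B := by
            rw [hA, hB, mem_setOf_eq, mem_setOf_eq, hmΦ, Real.exp_add t 1]
            rw [lt_mul_iff_one_lt_right (Real.exp_pos t), mul_lt_mul_iff_right₀ (Real.exp_pos t)]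
          by_cases h : p ∈ B
          · rw [indicator_of_mem (hmem.2 h), hmΦ, ← mul_div_assoc,
              mul_div_mul_left _ _ (Real.exp_pos t).ne']
            simp only [hH, indicator_of_mem h, hΦ, hc]
          · rw [indicator_of_notMem (fun hc' => h (hmem.1 hc'))]
            simp only [hH, indicator_of_notMem h, mul_zero]
  -- uniform bound
  set ρ : ℝ := Real.sqrt (Real.exp 1) / δ with hρ
  set S : Set (ℂ × ℂ) := Metric.closedBall (0:ℂ) R ×ˢ Metric.closedBall (0:ℂ) ρ with hSdef
  have hSmeas : MeasurableSet S := measurableSet_closedBall.prod measurableSet_closedBall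
  set bound : ℂ × ℂ → ℝ := S.indicator (fun _ => M) with hbnd
  have hbound_nonneg : ∀ p, 0 ≤ bound p := fun p => indicator_nonneg (fun _ _ => hM0) p
  have hkey : ∀ (p : ℂ × ℂ) (w : ℂ), p ∈ B → |g (p.1, w) / m p| ≤ bound p := by
    intro p w hpB
    by_cases hz : g (p.1, w) = 0
    · rw [hz, zero_div, abs_zero]; exact hbound_nonneg p
    · have hsupp' : ((p.1, w) : ℂ × ℂ) ∈ tsupport g := subset_tsupport g hz
      have h1 : δ ≤ ‖p.1‖ := hδ ((p.1, w) : ℂ × ℂ) hsupp'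
      have h2 : ‖p.1‖ ≤ R := le_trans (norm_fst_le ((p.1, w) : ℂ × ℂ)) (hR ((p.1, w) : ℂ × ℂ) hsupp')
      have hm1 : 1 < m p := hpB.1
      have hm2 : m p < Real.exp 1 := hpB.2
      have hnn1 : Complex.normSq p.1 = ‖p.1‖ ^ 2 := by
        rw [Complex.normSq_eq_norm_sq]
      have hnn2 : Complex.normSq p.2 = ‖p.2‖ ^ 2 := by
        rw [Complex.normSq_eq_norm_sq]
      have hδ2 : δ ^ 2 ≤ Complex.normSq p.1 := by rw [hnn1]; nlinarith
      have hmp : m p = Complex.normSq p.1 * Complex.normSq p.2 := rfl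
      have hnsq2 : (0:ℝ) ≤ Complex.normSq p.2 := Complex.normSq_nonneg _
      have hp2 : ‖p.2‖ ≤ ρ := by
        have hnsqlt : Complex.normSq p.2 * δ ^ 2 < Real.exp 1 := by
          calc Complex.normSq p.2 * δ ^ 2 ≤ Complex.normSq p.2 * Complex.normSq p.1 :=
                mul_le_mul_of_nonneg_left hδ2 hnsq2
            _ = m p := by rw [hmp]; ring
            _ < Real.exp 1 := hm2
        have hsq : ‖p.2‖ ^ 2 < ρ ^ 2 := by
          rw [hρ, div_pow, Real.sq_sqrt (Real.exp_pos 1).le, lt_div_iff₀ (by positivity)]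
          rw [← hnn2]; linarith
        nlinarith [norm_nonneg p.2, Real.sqrt_nonneg (Real.exp 1), hδpos,
          div_nonneg (Real.sqrt_nonneg (Real.exp 1)) hδpos.le]
      have hpS : p ∈ S := by
        refine ⟨?_, ?_⟩
        · rw [mem_closedBall_zero_iff]; exact h2
        · rw [mem_closedBall_zero_iff]; exact hp2
      rw [hbnd, indicator_of_mem hpS]
      have hmppos : 0 < m p := lt_trans one_pos hm1
      rw [abs_div, abs_of_pos hmppos, div_le_iff₀ hmppos]
      have hgM : |g (p.1, w)| ≤ M := by
        have := hM ((p.1, w) : ℂ × ℂ); rwa [Real.norm_eq_abs] at this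
      nlinarith
  have hbound_int : Integrable bound := by
    rw [hbnd]
    refine IntegrableOn.integrable_indicator ?_ hSmeas
    refine integrableOn_const ?_
    exact ((isCompact_closedBall (0:ℂ) R).prod (isCompact_closedBall (0:ℂ) ρ)).measure_lt_top.ne
  have hHmeas : ∀ t : ℝ, AEStronglyMeasurable (H t) volume := by
    intro t
    refine (Measurable.indicator ?_ hBm).aestronglyMeasurable
    exact ((hg.comp (continuous_fst.prodMk (continuous_snd.const_smul
      (Real.exp (t / 2))))).measurable.div hmC.measurable)
  have hHbound : ∀ t : ℝ, ∀ p, ‖H t p‖ ≤ bound p := by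
    intro t p
    by_cases h : p ∈ B
    · simp only [hH, indicator_of_mem h, Real.norm_eq_abs]
      exact hkey p _ h
    · simp only [hH, indicator_of_notMem h, norm_zero]
      exact hbound_nonneg p
  have hHlim_bound : ∀ p, ‖Hlim p‖ ≤ bound p := by
    intro p
    by_cases h : p ∈ B
    · simp only [hHlim, indicator_of_mem h, Real.norm_eq_abs]
      exact hkey p 0 h
    · simp only [hHlim, indicator_of_notMem h, norm_zero]
      exact hbound_nonneg p
  have hHlim_meas : AEStronglyMeasurable Hlim volume := by
    refine (Measurable.indicator ?_ hBm).aestronglyMeasurable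
    exact ((hg.comp (continuous_fst.prodMk continuous_const)).measurable.div hmC.measurable)
  have hHlim_int : Integrable Hlim := hbound_int.mono' hHlim_meas (ae_of_all _ hHlim_bound)
  have stepB : Tendsto (fun t => ∫ p, H t p) atBot (𝓝 (∫ p, Hlim p)) := by
    refine tendsto_integral_filter_of_dominated_convergence bound
      (Eventually.of_forall hHmeas) (Eventually.of_forall fun t => ae_of_all _ (hHbound t))
      hbound_int (ae_of_all _ ?_)
    intro p
    by_cases h : p ∈ B
    · simp only [hH, hHlim, indicator_of_mem h]
      have h0 : Tendsto (fun t : ℝ => t / 2) atBot atBot :=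
        tendsto_id.atBot_div_const two_pos
      have h1 : Tendsto (fun t : ℝ => Real.exp (t / 2)) atBot (𝓝 0) :=
        Real.tendsto_exp_atBot.comp h0
      have h2 : Tendsto (fun s : ℝ => g (p.1, s • p.2)) (𝓝 0) (𝓝 (g (p.1, 0))) := by
        have hc : Continuous fun s : ℝ => g (p.1, s • p.2) :=
          hg.comp (continuous_const.prodMk (continuous_id.smul continuous_const))
        have := hc.tendsto 0
        simpa using this
      exact (h2.comp h1).div_const _
    · simp only [hH, hHlim, indicator_of_notMem h]
      exact tendsto_const_nhds
  have stepC : (∫ p, Hlim p) = Real.pi * ∫ x : ℂ, g (x, 0) / Complex.normSq x := by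
    have hinner : ∀ x : ℂ,
        (∫ u : ℂ, Hlim (x, u)) = Real.pi * (g (x, 0) / Complex.normSq x) := by
      intro x
      by_cases hx : Complex.normSq x = 0
      · have hz : ∀ u : ℂ, Hlim (x, u) = 0 := by
          intro u
          refine indicator_of_notMem ?_ _
          rw [hB, mem_setOf_eq, hm]
          simp only
          rw [hx, zero_mul]
          rintro ⟨h1, -⟩
          linarith
        simp only [hz, integral_zero, hx, div_zero, mul_zero]
      · have hx' : 0 < Complex.normSq x := lt_of_le_of_ne (Complex.normSq_nonneg x) (Ne.symm hx)
        set a : ℝ := (Complex.normSq x)⁻¹ with ha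
        have hapos : 0 < a := inv_pos.2 hx'
        set S' : Set ℂ := {u : ℂ | a < Complex.normSq u ∧ Complex.normSq u < Real.exp 1 * a}
          with hS'
        have hS'm : MeasurableSet S' := by
          have : S' = Complex.normSq ⁻¹' (Ioo a (Real.exp 1 * a)) := rfl
          rw [this]; exact Complex.continuous_normSq.measurable measurableSet_Ioo
        have hrw : ∀ u : ℂ, Hlim (x, u)
            = S'.indicator (fun u => (g (x, 0) / Complex.normSq x) * (Complex.normSq u)⁻¹) u := by
          intro u
          have e1 : a < Complex.normSq u ↔ 1 < Complex.normSq x * Complex.normSq u := by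
            rw [ha, inv_eq_one_div, div_lt_iff₀ hx', mul_comm]
          have e2 : Complex.normSq u < Real.exp 1 * a
              ↔ Complex.normSq x * Complex.normSq u < Real.exp 1 := by
            rw [ha, ← div_eq_mul_inv, lt_div_iff₀ hx', mul_comm]
          have hmemiff : ((x, u) : ℂ × ℂ) ∈ B ↔ u ∈ S' := by
            rw [hB, hS', mem_setOf_eq, mem_setOf_eq, hm]
            simp only
            rw [e1, e2]
          by_cases h : ((x, u) : ℂ × ℂ) ∈ B
          · rw [indicator_of_mem (hmemiff.1 h)]
            simp only [hHlim, indicator_of_mem h, hm]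
            rw [← div_div, div_eq_mul_inv]
          · rw [indicator_of_notMem (fun hc' => h (hmemiff.2 hc'))]
            simp only [hHlim, indicator_of_notMem h]
        calc ∫ u : ℂ, Hlim (x, u)
            = ∫ u : ℂ, S'.indicator
                (fun u => (g (x, 0) / Complex.normSq x) * (Complex.normSq u)⁻¹) u := by
              congr 1; funext u; exact hrw u
          _ = ∫ u in S', (g (x, 0) / Complex.normSq x) * (Complex.normSq u)⁻¹ :=
              integral_indicator hS'm
          _ = (g (x, 0) / Complex.normSq x) * ∫ u in S', (Complex.normSq u)⁻¹ :=
              integral_const_mul _ _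
          _ = Real.pi * (g (x, 0) / Complex.normSq x) := by
              rw [annulus_integral hapos, mul_comm]
    have hint' : Integrable Hlim ((volume : Measure ℂ).prod volume) := by
      rwa [← Measure.volume_eq_prod]
    calc ∫ p, Hlim p = ∫ p, Hlim p ∂((volume : Measure ℂ).prod volume) := by
          rw [← Measure.volume_eq_prod]
      _ = ∫ x : ℂ, ∫ u : ℂ, Hlim (x, u) := integral_prod _ hint'
      _ = ∫ x : ℂ, Real.pi * (g (x, 0) / Complex.normSq x) := by
          congr 1; funext x; exact hinner x
      _ = Real.pi * ∫ x : ℂ, g (x, 0) / Complex.normSq x := integral_const_mul _ _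
  rw [funext stepA, ← stepC]
  exact stepB
end

section
/- Let u : ℂ → ℝ be continuous and let Ψ(z) = log|z|² + u(z). For every continuous compactly supported g : ℂ → ℝ, the limit as t → -∞ of ∫_{t < Ψ(z) < t+1} g(z) e^{-Ψ(z)} dλ(z) exists and equals π · e^{-u(0)} · g(0). -/
open MeasureTheory Filter Set Metric
open scoped Topology

namespace Stmt10Aux

def Ann (a b : ℝ) : Set ℂ := {z : ℂ | a < Complex.normSq z ∧ Complex.normSq z < b}

lemma measurableSet_Ann (a b : ℝ) : MeasurableSet (Ann a b) := by
  have : Ann a b = Complex.normSq ⁻¹' (Set.Ioo a b) := rfl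
  rw [this]
  exact Complex.continuous_normSq.measurable (measurableSet_Ioo)

lemma mem_Ann_iff {a b : ℝ} (ha : 0 < a) (z : ℂ) :
    z ∈ Ann a b ↔ ‖z‖ ∈ Set.Ioo (Real.sqrt a) (Real.sqrt b) := by
  have hn : Complex.normSq z = ‖z‖ ^ 2 := by
    rw [Complex.normSq_eq_norm_sq]
  constructor
  · rintro ⟨h1, h2⟩
    have hzpos : 0 < ‖z‖ := by
      by_contra h
      push_neg at h
      have : ‖z‖ = 0 := le_antisymm h (norm_nonneg z)
      rw [hn, this] at h1; simpa using ha.trans h1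
    exact ⟨(Real.sqrt_lt' hzpos).2 (by rw [← hn]; exact h1),
      (Real.lt_sqrt (norm_nonneg z)).2 (by rw [← hn]; exact h2)⟩
  · rintro ⟨h1, h2⟩
    have hzpos : 0 < ‖z‖ := (Real.sqrt_pos.2 ha).trans h1
    exact ⟨by rw [hn]; exact (Real.sqrt_lt' hzpos).1 h1,
      by rw [hn]; exact (Real.lt_sqrt (norm_nonneg z)).1 h2⟩

lemma integral_ann (a b : ℝ) (ha : 0 < a) (hab : a ≤ b) :
    ∫ z in Ann a b, (Complex.normSq z)⁻¹ = Real.pi * (Real.log b - Real.log a) := by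
  have hb : 0 < b := ha.trans_le hab
  have hsa : 0 < Real.sqrt a := Real.sqrt_pos.2 ha
  have hsb : 0 < Real.sqrt b := Real.sqrt_pos.2 hb
  set f : ℝ → ℝ := Set.indicator (Set.Ioo (Real.sqrt a) (Real.sqrt b)) (fun r => (r ^ 2)⁻¹)
    with hf
  have key : ∀ z : ℂ, Set.indicator (Ann a b) (fun z => (Complex.normSq z)⁻¹) z = f ‖z‖ := by
    intro z
    have hn : Complex.normSq z = ‖z‖ ^ 2 := by
      rw [Complex.normSq_eq_norm_sq]
    by_cases hz : z ∈ Ann a b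
    · rw [Set.indicator_of_mem hz, hf,
        Set.indicator_of_mem ((mem_Ann_iff ha z).1 hz), hn]
    · rw [Set.indicator_of_notMem hz, hf,
        Set.indicator_of_notMem (fun h => hz ((mem_Ann_iff ha z).2 h))]
  have inner : ∫ y in Set.Ioi (0:ℝ), y ^ (2 - 1) • f y = (Real.log b - Real.log a) / 2 := by
    have step1 : ∀ y ∈ Set.Ioi (0:ℝ), y ^ (2 - 1) • f y
        = Set.indicator (Set.Ioo (Real.sqrt a) (Real.sqrt b)) (fun r => r⁻¹) y := by
      intro y hy
      by_cases h : y ∈ Set.Ioo (Real.sqrt a) (Real.sqrt b)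
      · have hy0 : y ≠ 0 := ne_of_gt hy
        rw [hf, Set.indicator_of_mem h, Set.indicator_of_mem h, smul_eq_mul,
          (rfl : 2 - 1 = 1), pow_one]
        field_simp
      · rw [hf, Set.indicator_of_notMem h, Set.indicator_of_notMem h, smul_eq_mul, mul_zero]
    rw [setIntegral_congr_fun measurableSet_Ioi step1,
      setIntegral_indicator measurableSet_Ioo,
      Set.inter_eq_self_of_subset_right
        (show Set.Ioo (Real.sqrt a) (Real.sqrt b) ⊆ Set.Ioi 0 from fun y hy => hsa.trans hy.1)]
    rw [← MeasureTheory.integral_Ioc_eq_integral_Ioo,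
      ← intervalIntegral.integral_of_le (Real.sqrt_le_sqrt hab),
      integral_inv_of_pos hsa hsb, Real.log_div (ne_of_gt hsb) (ne_of_gt hsa),
      Real.log_sqrt hb.le, Real.log_sqrt ha.le]
    ring
  calc ∫ z in Ann a b, (Complex.normSq z)⁻¹
      = ∫ z : ℂ, Set.indicator (Ann a b) (fun z => (Complex.normSq z)⁻¹) z :=
        (integral_indicator (measurableSet_Ann a b)).symm
    _ = ∫ z : ℂ, f ‖z‖ := by simp only [key]
    _ = Real.pi * (Real.log b - Real.log a) := by
        rw [MeasureTheory.integral_fun_norm_addHaar volume f, Complex.finrank_real_complex,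
          inner]
        simp only [Measure.real, Complex.volume_ball, ENNReal.ofReal_one, one_pow, one_mul,
          ENNReal.coe_toReal, NNReal.coe_real_pi, nsmul_eq_mul, smul_eq_mul, Nat.cast_ofNat]
        ring

lemma integrableOn_bdd {s : Set ℂ} (hs : MeasurableSet s) {R : ℝ}
    (hsub : s ⊆ Metric.closedBall 0 R) {φ : ℂ → ℝ} (hφ : Measurable φ) {C : ℝ}
    (hC : ∀ z ∈ s, |φ z| ≤ C) : IntegrableOn φ s := by
  apply Measure.integrableOn_of_bounded (M := C)
  · exact ((measure_mono hsub).trans_lt measure_closedBall_lt_top).ne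
  · exact hφ.aestronglyMeasurable
  · exact (ae_restrict_iff' hs).2 (ae_of_all _ fun z hz => by
      simpa [Real.norm_eq_abs] using hC z hz)

end Stmt10Aux


/-- The Ohsawa measure of `(ℂ, log|z|² + u)` at the origin is `π e^{-u(0)} δ₀`:
the defining limit exists and equals `π · e^{-u 0} · g 0`.  (For `z ≠ 0`,
`t < log|z|² + u z < t + 1` is equivalent to `e^t < |z|² e^{u z} < e^{t+1}`.) -/
theorem stmt10 (u : ℂ → ℝ) (hu : Continuous u) (g : ℂ → ℝ) (hg : Continuous g)
    (hsupp : HasCompactSupport g) :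
    Tendsto
      (fun t : ℝ =>
        ∫ z in {z : ℂ |
            Real.exp t < Complex.normSq z * Real.exp (u z) ∧
            Complex.normSq z * Real.exp (u z) < Real.exp (t + 1)},
          g z * Real.exp (-(u z)) / Complex.normSq z)
      atBot (𝓝 (Real.pi * Real.exp (-(u 0)) * g 0)) := by
  obtain ⟨M, hM⟩ := (hsupp : IsCompact (tsupport g)).exists_bound_of_continuousOn hu.continuousOn
  rw [Metric.tendsto_nhds]
  intro ε hε
  set Err : ℝ → ℝ := fun d =>
    |g 0| * (Real.pi * Real.exp (d - u 0) * (1 + 2 * d)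
      - Real.pi * Real.exp (-d - u 0) * (1 - 2 * d))
    + d * (Real.pi * Real.exp (d - u 0) * (1 + 2 * d)) with hErr
  have hErrcont : ContinuousAt Err 0 := by rw [hErr]; fun_prop
  have hErr0 : Err 0 = 0 := by simp [hErr]
  have h1 : ∀ᶠ d in 𝓝[>] (0:ℝ), Err d < ε := by
    have h := hErrcont.tendsto
    rw [hErr0] at h
    exact ((h.mono_left nhdsWithin_le_nhds).eventually_lt_const hε)
  have h2 : ∀ᶠ d in 𝓝[>] (0:ℝ), d < 1/2 :=
    (Filter.Tendsto.eventually_lt_const (by norm_num : (0:ℝ) < 1/2)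
      Filter.tendsto_id).filter_mono nhdsWithin_le_nhds
  have h3 : ∀ᶠ d in 𝓝[>] (0:ℝ), d ∈ Set.Ioi (0:ℝ) := self_mem_nhdsWithin
  obtain ⟨δ, hδε, hδhalf, hδmem⟩ := (h1.and (h2.and h3)).exists
  have hδ0 : 0 < δ := hδmem
  obtain ⟨r1, hr1pos, hr1⟩ := Metric.continuousAt_iff.1 hu.continuousAt δ hδ0
  obtain ⟨r2, hr2pos, hr2⟩ := Metric.continuousAt_iff.1 hg.continuousAt δ hδ0
  have hminpos : 0 < min r1 r2 := lt_min hr1pos hr2pos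
  set r : ℝ := min r1 r2 / 2 with hrdef
  have hrpos : 0 < r := by positivity
  have hball : ∀ z ∈ Metric.closedBall (0:ℂ) r, |u z - u 0| ≤ δ ∧ |g z - g 0| ≤ δ := by
    intro z hz
    have hzr : dist z 0 ≤ r := Metric.mem_closedBall.1 hz
    have hrlt : r < min r1 r2 := by rw [hrdef]; linarith
    have hz1 : dist z 0 < r1 := lt_of_le_of_lt hzr (hrlt.trans_le (min_le_left _ _))
    have hz2 : dist z 0 < r2 := lt_of_le_of_lt hzr (hrlt.trans_le (min_le_right _ _))
    exact ⟨le_of_lt (by simpa [Real.dist_eq] using hr1 hz1),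
      le_of_lt (by simpa [Real.dist_eq] using hr2 hz2)⟩
  rw [eventually_atBot]
  refine ⟨Real.log (r ^ 2) - |M| - |u 0| - 2, fun t ht => ?_⟩
  show dist (∫ z in {z : ℂ |
      Real.exp t < Complex.normSq z * Real.exp (u z) ∧
      Complex.normSq z * Real.exp (u z) < Real.exp (t + 1)},
      g z * Real.exp (-(u z)) / Complex.normSq z) (Real.pi * Real.exp (-(u 0)) * g 0) < ε
  set A : Set ℂ := {z : ℂ |
      Real.exp t < Complex.normSq z * Real.exp (u z) ∧
      Complex.normSq z * Real.exp (u z) < Real.exp (t + 1)} with hAdef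
  have hAm : MeasurableSet A := by
    have : A = (fun z : ℂ => Complex.normSq z * Real.exp (u z)) ⁻¹'
        (Set.Ioo (Real.exp t) (Real.exp (t + 1))) := rfl
    rw [this]
    exact (Complex.continuous_normSq.mul (Real.continuous_exp.comp hu)).measurable
      measurableSet_Ioo
  have hSm : MeasurableSet (A ∩ Metric.closedBall (0:ℂ) r) :=
    hAm.inter measurableSet_closedBall
  have hrsq : Real.exp (Real.log (r ^ 2)) = r ^ 2 := Real.exp_log (by positivity)
  have ht1 : t + 1 + M ≤ Real.log (r ^ 2) := by
    have := le_abs_self M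
    have := abs_nonneg (u 0)
    linarith
  have ht2 : t + 1 - δ - u 0 ≤ Real.log (r ^ 2) := by
    have := neg_le_abs (u 0)
    have := abs_nonneg M
    linarith
  have hmemB : ∀ z : ℂ, Complex.normSq z ≤ r ^ 2 → z ∈ Metric.closedBall (0:ℂ) r := by
    intro z hz
    rw [Metric.mem_closedBall, dist_zero_right]
    have hn : Complex.normSq z = ‖z‖ ^ 2 := by
      rw [Complex.normSq_eq_norm_sq]
    nlinarith [norm_nonneg z, hrpos]
  have hAsupp : ∀ z ∈ A, z ∉ Metric.closedBall (0:ℂ) r → g z = 0 := by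
    intro z hzA hzB
    by_contra hgz
    have hzsupp : z ∈ tsupport g := subset_tsupport g hgz
    have hMz : -M ≤ u z := by
      have := abs_le.1 (by simpa [Real.norm_eq_abs] using hM z hzsupp)
      linarith [this.1]
    have hlt : Complex.normSq z * Real.exp (-M) ≤ Complex.normSq z * Real.exp (u z) :=
      mul_le_mul_of_nonneg_left (Real.exp_le_exp.2 hMz) (Complex.normSq_nonneg z)
    have h4 : Complex.normSq z * Real.exp (-M) < Real.exp (t + 1) := hlt.trans_lt hzA.2
    have hns : Complex.normSq z < Real.exp (t + 1 + M) := by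
      rw [show t + 1 + M = (t + 1) - -M by ring, Real.exp_sub]
      exact (lt_div_iff₀ (Real.exp_pos _)).2 h4
    exact hzB (hmemB z (by
      have : Real.exp (t + 1 + M) ≤ r ^ 2 := by
        rw [← hrsq]; exact Real.exp_le_exp.2 ht1
      linarith))
  have hSann : A ∩ Metric.closedBall (0:ℂ) r ⊆
      Stmt10Aux.Ann (Real.exp (t - δ - u 0)) (Real.exp (t + 1 + δ - u 0)) := by
    rintro z ⟨hzA, hzB⟩
    obtain ⟨huz, -⟩ := hball z hzB
    have hub := abs_le.1 huz
    constructor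
    · have hx1 : Real.exp (t - δ - u 0) * Real.exp (u z) ≤ Real.exp t := by
        rw [← Real.exp_add]
        exact Real.exp_le_exp.2 (by linarith [hub.2])
      exact lt_of_mul_lt_mul_right (hx1.trans_lt hzA.1) (Real.exp_pos (u z)).le
    · have hx1 : Real.exp (t + 1) ≤ Real.exp (t + 1 + δ - u 0) * Real.exp (u z) := by
        rw [← Real.exp_add]
        exact Real.exp_le_exp.2 (by linarith [hub.1])
      exact lt_of_mul_lt_mul_right (hzA.2.trans_le hx1) (Real.exp_pos (u z)).le
  have hannS : Stmt10Aux.Ann (Real.exp (t + δ - u 0)) (Real.exp (t + 1 - δ - u 0)) ⊆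
      A ∩ Metric.closedBall (0:ℂ) r := by
    rintro z ⟨hz1, hz2⟩
    have hzB : z ∈ Metric.closedBall (0:ℂ) r := hmemB z (by
      have : Real.exp (t + 1 - δ - u 0) ≤ r ^ 2 := by
        rw [← hrsq]; exact Real.exp_le_exp.2 ht2
      linarith)
    obtain ⟨huz, -⟩ := hball z hzB
    have hub := abs_le.1 huz
    refine ⟨⟨?_, ?_⟩, hzB⟩
    · have hx : Real.exp (t + δ - u 0) * Real.exp (u 0 - δ)
          < Complex.normSq z * Real.exp (u z) :=
        mul_lt_mul hz1 (Real.exp_le_exp.2 (by linarith [hub.1])) (Real.exp_pos _)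
          (Complex.normSq_nonneg z)
      calc Real.exp t = Real.exp (t + δ - u 0) * Real.exp (u 0 - δ) := by
            rw [← Real.exp_add]; ring_nf
        _ < _ := hx
    · have hx : Complex.normSq z * Real.exp (u z)
          < Real.exp (t + 1 - δ - u 0) * Real.exp (u 0 + δ) :=
        mul_lt_mul hz2 (Real.exp_le_exp.2 (by linarith [hub.2])) (Real.exp_pos _)
          (Real.exp_pos _).le
      calc Complex.normSq z * Real.exp (u z)
          < Real.exp (t + 1 - δ - u 0) * Real.exp (u 0 + δ) := hx
        _ = Real.exp (t + 1) := by rw [← Real.exp_add]; ring_nf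
  set w : ℂ → ℝ := fun z => Real.exp (-(u z)) * (Complex.normSq z)⁻¹ with hwdef
  have hw_nonneg : ∀ z, 0 ≤ w z := fun z =>
    mul_nonneg (Real.exp_pos _).le (inv_nonneg.2 (Complex.normSq_nonneg z))
  have ha'pos : (0:ℝ) < Real.exp (t - δ - u 0) := Real.exp_pos _
  have hSbound : ∀ z ∈ A ∩ Metric.closedBall (0:ℂ) r,
      Real.exp (t - δ - u 0) < Complex.normSq z ∧ u 0 - δ ≤ u z ∧ u z ≤ u 0 + δ ∧
      |g z - g 0| ≤ δ := by
    intro z hz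
    obtain ⟨hz1, -⟩ := hSann hz
    obtain ⟨huz, hgz⟩ := hball z hz.2
    have hub := abs_le.1 huz
    exact ⟨hz1, by linarith [hub.1], by linarith [hub.2], hgz⟩
  have hwm : Measurable w := ((Real.continuous_exp.comp hu.neg).measurable).mul
    (Complex.continuous_normSq.measurable.inv)
  have hinv_m : Measurable (fun z : ℂ => (Complex.normSq z)⁻¹) :=
    Complex.continuous_normSq.measurable.inv
  have hw_bd : ∀ z ∈ A ∩ Metric.closedBall (0:ℂ) r,
      |w z| ≤ Real.exp (δ - u 0) * (Real.exp (t - δ - u 0))⁻¹ := by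
    intro z hz
    obtain ⟨hns, hu1, hu2, -⟩ := hSbound z hz
    rw [abs_of_nonneg (hw_nonneg z)]
    exact mul_le_mul (Real.exp_le_exp.2 (by linarith))
      (inv_anti₀ ha'pos hns.le)
      (inv_nonneg.2 (Complex.normSq_nonneg z)) (Real.exp_pos _).le
  have hw_int : IntegrableOn w (A ∩ Metric.closedBall (0:ℂ) r) :=
    Stmt10Aux.integrableOn_bdd hSm Set.inter_subset_right hwm hw_bd
  have hinv_int_S : IntegrableOn (fun z : ℂ => (Complex.normSq z)⁻¹)
      (A ∩ Metric.closedBall (0:ℂ) r) :=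
    Stmt10Aux.integrableOn_bdd hSm Set.inter_subset_right hinv_m
      (C := (Real.exp (t - δ - u 0))⁻¹) (fun z hz => by
        obtain ⟨hns, -, -, -⟩ := hSbound z hz
        rw [abs_of_nonneg (inv_nonneg.2 (Complex.normSq_nonneg z))]
        exact inv_anti₀ ha'pos hns.le)
  have hinv_int_Ann : IntegrableOn (fun z : ℂ => (Complex.normSq z)⁻¹)
      (Stmt10Aux.Ann (Real.exp (t - δ - u 0)) (Real.exp (t + 1 + δ - u 0))) := by
    refine Stmt10Aux.integrableOn_bdd (Stmt10Aux.measurableSet_Ann _ _)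
      (R := Real.sqrt (Real.exp (t + 1 + δ - u 0)))
      (fun z hz => ?_) hinv_m (C := (Real.exp (t - δ - u 0))⁻¹) (fun z hz => by
        rw [abs_of_nonneg (inv_nonneg.2 (Complex.normSq_nonneg z))]
        exact inv_anti₀ ha'pos hz.1.le)
    rw [Metric.mem_closedBall, dist_zero_right]
    exact ((Stmt10Aux.mem_Ann_iff ha'pos z).1 hz).2.le
  have hgw_int : IntegrableOn (fun z => (g z - g 0) * w z)
      (A ∩ Metric.closedBall (0:ℂ) r) :=
    Stmt10Aux.integrableOn_bdd hSm Set.inter_subset_right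
      (((hg.sub continuous_const).measurable).mul hwm)
      (C := δ * (Real.exp (δ - u 0) * (Real.exp (t - δ - u 0))⁻¹)) (fun z hz => by
        obtain ⟨-, -, -, hgz⟩ := hSbound z hz
        rw [abs_mul]
        exact mul_le_mul hgz (hw_bd z hz) (abs_nonneg _) hδ0.le)
  have hwP_ub : ∫ z in A ∩ Metric.closedBall (0:ℂ) r, w z
      ≤ Real.exp (δ - u 0) * (Real.pi * (1 + 2 * δ)) := by
    have step4 : ∫ z in Stmt10Aux.Ann (Real.exp (t - δ - u 0))
        (Real.exp (t + 1 + δ - u 0)), (Complex.normSq z)⁻¹ = Real.pi * (1 + 2 * δ) := by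
      rw [Stmt10Aux.integral_ann _ _ ha'pos (Real.exp_le_exp.2 (by linarith)),
        Real.log_exp, Real.log_exp]
      ring
    calc ∫ z in A ∩ Metric.closedBall (0:ℂ) r, w z
        ≤ ∫ z in A ∩ Metric.closedBall (0:ℂ) r,
            Real.exp (δ - u 0) * (Complex.normSq z)⁻¹ :=
          setIntegral_mono_on hw_int (hinv_int_S.const_mul _) hSm (fun z hz => by
            obtain ⟨-, hu1, -, -⟩ := hSbound z hz
            exact mul_le_mul_of_nonneg_right (Real.exp_le_exp.2 (by linarith))
              (inv_nonneg.2 (Complex.normSq_nonneg z)))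
      _ = Real.exp (δ - u 0) * ∫ z in A ∩ Metric.closedBall (0:ℂ) r,
            (Complex.normSq z)⁻¹ := integral_const_mul _ _
      _ ≤ Real.exp (δ - u 0) * ∫ z in Stmt10Aux.Ann (Real.exp (t - δ - u 0))
            (Real.exp (t + 1 + δ - u 0)), (Complex.normSq z)⁻¹ :=
          mul_le_mul_of_nonneg_left
            (setIntegral_mono_set hinv_int_Ann
              (ae_of_all _ fun z => inv_nonneg.2 (Complex.normSq_nonneg z))
              (HasSubset.Subset.eventuallyLE hSann)) (Real.exp_pos _).le
      _ = Real.exp (δ - u 0) * (Real.pi * (1 + 2 * δ)) := by rw [step4]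
  have hwP_lb : Real.exp (-δ - u 0) * (Real.pi * (1 - 2 * δ))
      ≤ ∫ z in A ∩ Metric.closedBall (0:ℂ) r, w z := by
    have hab : Real.exp (t + δ - u 0) ≤ Real.exp (t + 1 - δ - u 0) :=
      Real.exp_le_exp.2 (by linarith)
    have hw_int_ann : IntegrableOn w (Stmt10Aux.Ann (Real.exp (t + δ - u 0))
        (Real.exp (t + 1 - δ - u 0))) := hw_int.mono_set hannS
    have step3 : ∫ z in Stmt10Aux.Ann (Real.exp (t + δ - u 0))
        (Real.exp (t + 1 - δ - u 0)), Real.exp (-δ - u 0) * (Complex.normSq z)⁻¹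
        = Real.exp (-δ - u 0) * (Real.pi * (1 - 2 * δ)) := by
      rw [integral_const_mul, Stmt10Aux.integral_ann _ _ (Real.exp_pos _) hab,
        Real.log_exp, Real.log_exp]
      ring
    calc Real.exp (-δ - u 0) * (Real.pi * (1 - 2 * δ))
        = ∫ z in Stmt10Aux.Ann (Real.exp (t + δ - u 0))
            (Real.exp (t + 1 - δ - u 0)), Real.exp (-δ - u 0) * (Complex.normSq z)⁻¹ :=
          step3.symm
      _ ≤ ∫ z in Stmt10Aux.Ann (Real.exp (t + δ - u 0))
            (Real.exp (t + 1 - δ - u 0)), w z :=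
          setIntegral_mono_on ((hinv_int_S.mono_set hannS).const_mul _) hw_int_ann
            (Stmt10Aux.measurableSet_Ann _ _) (fun z hz => by
              obtain ⟨-, -, hu2, -⟩ := hSbound z (hannS hz)
              exact mul_le_mul_of_nonneg_right (Real.exp_le_exp.2 (by linarith))
                (inv_nonneg.2 (Complex.normSq_nonneg z)))
      _ ≤ ∫ z in A ∩ Metric.closedBall (0:ℂ) r, w z :=
          setIntegral_mono_set hw_int (ae_of_all _ hw_nonneg)
            (HasSubset.Subset.eventuallyLE hannS)
  have hE : |∫ z in A ∩ Metric.closedBall (0:ℂ) r, (g z - g 0) * w z|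
      ≤ δ * ∫ z in A ∩ Metric.closedBall (0:ℂ) r, w z := by
    calc |∫ z in A ∩ Metric.closedBall (0:ℂ) r, (g z - g 0) * w z|
        ≤ ∫ z in A ∩ Metric.closedBall (0:ℂ) r, |(g z - g 0) * w z| := by
          have hni := norm_integral_le_integral_norm
            (μ := volume.restrict (A ∩ Metric.closedBall (0:ℂ) r))
            (fun z => (g z - g 0) * w z)
          simpa only [Real.norm_eq_abs] using hni
      _ ≤ ∫ z in A ∩ Metric.closedBall (0:ℂ) r, δ * w z :=
          setIntegral_mono_on hgw_int.abs (hw_int.const_mul δ) hSm (fun z hz => by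
            obtain ⟨-, -, -, hgz⟩ := hSbound z hz
            rw [abs_mul, abs_of_nonneg (hw_nonneg z)]
            exact mul_le_mul_of_nonneg_right hgz (hw_nonneg z))
      _ = δ * ∫ z in A ∩ Metric.closedBall (0:ℂ) r, w z := integral_const_mul _ _
  have hfs : ∀ z ∈ A, g z * Real.exp (-(u z)) / Complex.normSq z
      = (Metric.closedBall (0:ℂ) r).indicator
          (fun z => g z * Real.exp (-(u z)) / Complex.normSq z) z := by
    intro z hz
    by_cases hzB : z ∈ Metric.closedBall (0:ℂ) r
    · rw [Set.indicator_of_mem hzB]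
    · rw [Set.indicator_of_notMem hzB, hAsupp z hz hzB, zero_mul, zero_div]
  have hA_eq : (∫ z in A, g z * Real.exp (-(u z)) / Complex.normSq z)
      = ∫ z in A ∩ Metric.closedBall (0:ℂ) r,
          g z * Real.exp (-(u z)) / Complex.normSq z := by
    rw [setIntegral_congr_fun hAm hfs, setIntegral_indicator measurableSet_closedBall]
  have hsplit : ∫ z in A ∩ Metric.closedBall (0:ℂ) r,
        g z * Real.exp (-(u z)) / Complex.normSq z
      = g 0 * (∫ z in A ∩ Metric.closedBall (0:ℂ) r, w z)
        + ∫ z in A ∩ Metric.closedBall (0:ℂ) r, (g z - g 0) * w z := by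
    have hpt : ∀ z : ℂ, g z * Real.exp (-(u z)) / Complex.normSq z
        = g 0 * w z + (g z - g 0) * w z := by
      intro z
      rw [hwdef]
      simp only [div_eq_mul_inv]
      ring
    simp_rw [hpt]
    rw [integral_add (hw_int.const_mul _) hgw_int, integral_const_mul]
  rw [Real.dist_eq, hA_eq, hsplit]
  set P := ∫ z in A ∩ Metric.closedBall (0:ℂ) r, w z with hPdef
  set E := ∫ z in A ∩ Metric.closedBall (0:ℂ) r, (g z - g 0) * w z with hEdef
  have hππ : Real.pi * Real.exp (-δ - u 0) ≤ Real.pi * Real.exp (-(u 0)) :=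
    mul_le_mul_of_nonneg_left (Real.exp_le_exp.2 (by linarith)) Real.pi_pos.le
  have hππ' : Real.pi * Real.exp (-(u 0)) ≤ Real.pi * Real.exp (δ - u 0) :=
    mul_le_mul_of_nonneg_left (Real.exp_le_exp.2 (by linarith)) Real.pi_pos.le
  have hXpos : (0:ℝ) < Real.pi * Real.exp (-δ - u 0) :=
    mul_pos Real.pi_pos (Real.exp_pos _)
  have hYpos : (0:ℝ) < Real.pi * Real.exp (δ - u 0) :=
    mul_pos Real.pi_pos (Real.exp_pos _)
  have hLoLe : Real.exp (-δ - u 0) * (Real.pi * (1 - 2 * δ)) ≤ Real.pi * Real.exp (-(u 0)) := by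
    nlinarith [hδ0, hδhalf]
  have hHiGe : Real.pi * Real.exp (-(u 0)) ≤ Real.exp (δ - u 0) * (Real.pi * (1 + 2 * δ)) := by
    nlinarith [hδ0]
  have hPdev : |P - Real.pi * Real.exp (-(u 0))|
      ≤ Real.exp (δ - u 0) * (Real.pi * (1 + 2 * δ))
        - Real.exp (-δ - u 0) * (Real.pi * (1 - 2 * δ)) :=
    abs_le.2 ⟨by linarith, by linarith⟩
  have hPnn : 0 ≤ P := by
    rw [hPdef]
    exact setIntegral_nonneg hSm (fun z _ => hw_nonneg z)
  have hEbd : |E| ≤ δ * (Real.exp (δ - u 0) * (Real.pi * (1 + 2 * δ))) := by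
    have h5 : δ * P ≤ δ * (Real.exp (δ - u 0) * (Real.pi * (1 + 2 * δ))) :=
      mul_le_mul_of_nonneg_left hwP_ub hδ0.le
    linarith [hE]
  have key : |g 0 * P + E - Real.pi * Real.exp (-(u 0)) * g 0| ≤ Err δ := by
    have h6 : g 0 * P + E - Real.pi * Real.exp (-(u 0)) * g 0
        = g 0 * (P - Real.pi * Real.exp (-(u 0))) + E := by ring
    rw [h6]
    calc |g 0 * (P - Real.pi * Real.exp (-(u 0))) + E|
        ≤ |g 0 * (P - Real.pi * Real.exp (-(u 0)))| + |E| := abs_add_le _ _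
      _ = |g 0| * |P - Real.pi * Real.exp (-(u 0))| + |E| := by rw [abs_mul]
      _ ≤ |g 0| * (Real.exp (δ - u 0) * (Real.pi * (1 + 2 * δ))
            - Real.exp (-δ - u 0) * (Real.pi * (1 - 2 * δ)))
          + δ * (Real.exp (δ - u 0) * (Real.pi * (1 + 2 * δ))) :=
          add_le_add (mul_le_mul_of_nonneg_left hPdev (abs_nonneg _)) hEbd
      _ = Err δ := by simp only [hErr]; ring
  linarith [key, hδε, abs_nonneg (g 0 * P + E - Real.pi * Real.exp (-(u 0)) * g 0),
    le_abs_self (g 0 * P + E - Real.pi * Real.exp (-(u 0)) * g 0),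
    neg_abs_le (g 0 * P + E - Real.pi * Real.exp (-(u 0)) * g 0)]
end
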